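/- arXiv:2008.04758 — 7 statements merged into one kernel-verified Lean document; each statement's English description precedes it below -/
import Mathlib

section
/- Let A be a bounded subnormal operator on a complex Hilbert space H and let n ≥ 2 be an integer. If A^n is quasinormal (i.e., A^n commutes with (A^n)*(A^n)), then A is quasinormal (i.e., A commutes with A*A). -/
open ContinuousLinearMap

universe u

/-- A bounded operator is quasinormal if it commutes with `A*A`. -/
def Quasinormal {H : Type u} [NormedAddCommGroup H] [InnerProductSpace ℂ H] [CompleteSpace H]
    (A : H →L[ℂ] H) : Prop :=
  A * (adjoint A * A) = (adjoint A * A) * A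

/-- A normal extension of `A`: a Hilbert space `K` containing `H` (via an isometric linear
embedding `J`), and a normal operator `N` on `K` leaving the copy of `H` invariant and
restricting to `A` there. -/
structure NormalExtension {H : Type u} [NormedAddCommGroup H] [InnerProductSpace ℂ H]
    [CompleteSpace H] (A : H →L[ℂ] H) where
  K : Type u
  [instNorm : NormedAddCommGroup K]
  [instInner : InnerProductSpace ℂ K]
  [instComplete : CompleteSpace K]
  J : H →ₗᵢ[ℂ] K
  N : K →L[ℂ] K
  normal : adjoint N * N = N * adjoint N
  ext_eq : ∀ h : H, N (J h) = J (A h)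

/-- A bounded operator is subnormal if it has a normal extension. -/
def Subnormal {H : Type u} [NormedAddCommGroup H] [InnerProductSpace ℂ H] [CompleteSpace H]
    (A : H →L[ℂ] H) : Prop :=
  Nonempty (NormalExtension A)


section AuxiliaryLemmas

open Polynomial

variable {K : Type u} [NormedAddCommGroup K] [InnerProductSpace ℂ K] [CompleteSpace K]

/-- If `b` commutes with a selfadjoint `a`, then it commutes with `cfc f a`. -/
lemma commute_cfc_aux {a b : K →L[ℂ] K} (ha : IsSelfAdjoint a) (hb : b * a = a * b)
    (f : ℝ → ℝ) : b * cfc f a = cfc f a * b := by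
  by_cases hf : ContinuousOn f (spectrum ℝ a)
  · rw [cfc_apply f a ha hf]
    set φ := cfcHom (R := ℝ) ha with hφ
    suffices H : ∀ g : C(spectrum ℝ a, ℝ), b * φ g = φ g * b from H _
    intro g
    have hcont : Continuous φ := (cfcHom_isClosedEmbedding (R := ℝ) ha).continuous
    have hclosed : IsClosed {g : C(spectrum ℝ a, ℝ) | b * φ g = φ g * b} :=
      isClosed_eq ((continuous_mul_left b).comp hcont) ((continuous_mul_right b).comp hcont)
    have hpoly : ∀ p : ℝ[X], b * φ (p.toContinuousMapOn (spectrum ℝ a)) =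
        φ (p.toContinuousMapOn (spectrum ℝ a)) * b := by
      intro p
      have hX : (X : ℝ[X]).toContinuousMapOn (spectrum ℝ a) =
          (ContinuousMap.id ℝ).restrict (spectrum ℝ a) := by
        ext x; simp [Polynomial.toContinuousMapOn, Polynomial.toContinuousMap]
      let ψ : ℝ[X] →ₐ[ℝ] (K →L[ℂ] K) :=
        (φ : C(spectrum ℝ a, ℝ) →⋆ₐ[ℝ] (K →L[ℂ] K)).toAlgHom.comp
          (toContinuousMapOnAlgHom (spectrum ℝ a))
      have hψX : ψ X = a := by
        show φ ((X : ℝ[X]).toContinuousMapOn (spectrum ℝ a)) = a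
        rw [hX]; exact cfcHom_id ha
      have hψ : ∀ q : ℝ[X], ψ q = aeval a q := by
        intro q
        have := Polynomial.aeval_algHom_apply ψ X q
        rw [Polynomial.aeval_X_left_apply] at this
        rw [← this, hψX]
      have hcommb : Commute b a := hb
      have : Commute b (aeval a p) := by
        induction p using Polynomial.induction_on with
        | C r => simpa [Polynomial.aeval_C] using
            (Algebra.commute_algebraMap_left r b).symm
        | add p q hp hq => simpa [map_add] using hp.add_right hq
        | monomial k r _ =>
            simp only [map_mul, Polynomial.aeval_C, map_pow, Polynomial.aeval_X]
            exact ((Algebra.commute_algebraMap_left r b).symm).mul_right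
              (hcommb.pow_right (k + 1))
      have := hψ p ▸ this
      exact this
    have hmem : g ∈ ((polynomialFunctions (spectrum ℝ a)).topologicalClosure : Set _) := by
      rw [polynomialFunctions.topologicalClosure (spectrum ℝ a)]; trivial
    have hsub : (polynomialFunctions (spectrum ℝ a) : Set C(spectrum ℝ a, ℝ)) ⊆
        {g | b * φ g = φ g * b} := by
      intro g hg
      rw [SetLike.mem_coe, ← SetLike.mem_coe, polynomialFunctions_coe] at hg
      obtain ⟨p, rfl⟩ := hg
      exact hpoly p
    have := closure_minimal hsub hclosed
    rw [Subalgebra.topologicalClosure_coe] at hmem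
    exact this hmem
  · rw [cfc_apply_of_not_continuousOn a hf, mul_zero, zero_mul]

/-- If `b` commutes with `a ^ n` for a nonneg `a` and `n ≠ 0`, then `b` commutes with `a`. -/
lemma commute_of_commute_pow_aux {a b : K →L[ℂ] K} (ha : (0 : K →L[ℂ] K) ≤ a) {n : ℕ}
    (hn : n ≠ 0) (hb : b * a ^ n = a ^ n * b) : b * a = a * b := by
  have hsa : IsSelfAdjoint a := .of_nonneg ha
  have hsan : IsSelfAdjoint (a ^ n) := hsa.pow n
  have hnR : (n : ℝ) ≠ 0 := Nat.cast_ne_zero.mpr hn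
  have hcf : Continuous (fun t : ℝ => t ^ ((n : ℝ)⁻¹)) := by
    rw [continuous_iff_continuousAt]
    intro x
    exact Real.continuousAt_rpow_const x _ (Or.inr (by positivity))
  have key : cfc (fun t : ℝ => t ^ ((n : ℝ)⁻¹)) (a ^ n) = a := by
    rw [← cfc_pow_id (R := ℝ) a n hsa,
      ← cfc_comp' (fun t : ℝ => t ^ ((n : ℝ)⁻¹)) (fun t : ℝ => t ^ n) a
        hcf.continuousOn (continuous_pow n).continuousOn hsa]
    have : ∀ t ∈ spectrum ℝ a, (t ^ n : ℝ) ^ ((n : ℝ)⁻¹) = t := by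
      intro t ht
      have htn : (0 : ℝ) ≤ t := spectrum_nonneg_of_nonneg ha ht
      rw [← Real.rpow_natCast t n, ← Real.rpow_mul htn, mul_inv_cancel₀ hnR, Real.rpow_one]
    rw [cfc_congr this, cfc_id' ℝ a hsa]
  rw [← key]
  exact commute_cfc_aux hsan hb _

end AuxiliaryLemmas

local notation "⟪" x ", " y "⟫" => @inner ℂ _ _ x y

/-- Subnormal `n`th roots of quasinormal operators are quasinormal. -/
theorem subnormal_root_of_quasinormal_is_quasinormal
    {H : Type u} [NormedAddCommGroup H] [InnerProductSpace ℂ H] [CompleteSpace H]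
    (A : H →L[ℂ] H) (n : ℕ) (hn : 2 ≤ n) (hsub : Subnormal A)
    (hq : Quasinormal (A ^ n)) : Quasinormal A := by
  obtain ⟨e⟩ := hsub
  letI : NormedAddCommGroup e.K := e.instNorm
  letI : InnerProductSpace ℂ e.K := e.instInner
  letI : CompleteSpace e.K := e.instComplete
  set J := e.J with hJdef
  set N := e.N with hNdef
  have hNJ : ∀ x : H, N (J x) = J (A x) := e.ext_eq
  set Q : e.K →L[ℂ] e.K := star N * N with hQdef
  have hnormal : star N * N = N * star N := by
    rw [star_eq_adjoint]; exact e.normal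
  have hcomm' : Commute (star N) N := hnormal
  have hQN : Q * N = N * Q := by
    rw [hQdef, ← mul_assoc, ← hnormal]
  have hQpow : ∀ k : ℕ, Q ^ k = adjoint (N ^ k) * N ^ k := by
    intro k
    rw [hQdef, hcomm'.mul_pow, ← star_pow, star_eq_adjoint]
  have hNJk : ∀ (k : ℕ) (x : H), (N ^ k) (J x) = J ((A ^ k) x) := by
    intro k
    induction k with
    | zero => intro x; simp
    | succ k ih =>
        intro x
        rw [pow_succ, pow_succ, mul_apply_eq_comp, mul_apply_eq_comp, hNJ, ih]
  have key : ∀ (k : ℕ) (x y : H), ⟪(Q ^ k) (J x), J y⟫ = ⟪(A ^ k) x, (A ^ k) y⟫ := by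
    intro k x y
    rw [hQpow k, mul_apply_eq_comp, adjoint_inner_left, hNJk, hNJk, LinearIsometry.inner_map_map]
  have hQsa : IsSelfAdjoint Q := by
    rw [hQdef]
    exact IsSelfAdjoint.star_mul_self N
  have hQksa : ∀ k : ℕ, IsSelfAdjoint (Q ^ k) := fun k => hQsa.pow k
  have hsa_inner : ∀ (T : e.K →L[ℂ] e.K), IsSelfAdjoint T → ∀ u v : e.K,
      ⟪T u, v⟫ = ⟪u, T v⟫ := by
    intro T hT u v
    conv_lhs => rw [← hT.adjoint_eq]
    rw [adjoint_inner_left]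
  -- quasinormality of B := A ^ n, pointwise
  have hqe : (A ^ n) * (adjoint (A ^ n) * (A ^ n)) = (adjoint (A ^ n) * (A ^ n)) * (A ^ n) := hq
  -- Step 1 : Q^n (J x) = J ((adjoint (A^n) * A^n) x)
  have hQnJ : ∀ x : H, (Q ^ n) (J x) = J ((adjoint (A ^ n) * (A ^ n)) x) := by
    intro x
    set w := (Q ^ n) (J x) - J ((adjoint (A ^ n) * (A ^ n)) x) with hw
    have horth : ∀ y : H, ⟪w, J y⟫ = 0 := by
      intro y
      rw [hw, inner_sub_left, key n x y, LinearIsometry.inner_map_map, mul_apply_eq_comp,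
        adjoint_inner_left, sub_self]
    have h1 : ⟪(Q ^ n) (J x), (Q ^ n) (J x)⟫ = ⟪(A ^ (n + n)) x, (A ^ (n + n)) x⟫ := by
      have hpow : (Q ^ n) ((Q ^ n) (J x)) = (Q ^ (n + n)) (J x) := by
        rw [pow_add, mul_apply_eq_comp]
      rw [hsa_inner _ (hQksa n), hpow, ← hsa_inner _ (hQksa (n + n)), key (n + n) x x]
    have h2 : ⟪(Q ^ n) (J x), J ((adjoint (A ^ n) * (A ^ n)) x)⟫
        = ⟪(A ^ (n + n)) x, (A ^ (n + n)) x⟫ := by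
      rw [key n x ((adjoint (A ^ n) * (A ^ n)) x)]
      have hqx : (A ^ n) ((adjoint (A ^ n) * (A ^ n)) x)
          = (adjoint (A ^ n) * (A ^ n)) ((A ^ n) x) := by
        rw [← mul_apply_eq_comp, ← mul_apply_eq_comp, hqe]
      rw [hqx, mul_apply_eq_comp, adjoint_inner_right, ← mul_apply_eq_comp, ← pow_add]
    have hQnw : ⟪(Q ^ n) (J x), w⟫ = 0 := by
      rw [hw, inner_sub_right, h1, h2, sub_self]
    have hww : ⟪w, w⟫ = 0 := by
      have hJw : ⟪J ((adjoint (A ^ n) * (A ^ n)) x), w⟫ = 0 := by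
        rw [← inner_conj_symm, horth, map_zero]
      calc ⟪w, w⟫ = ⟪(Q ^ n) (J x), w⟫ - ⟪J ((adjoint (A ^ n) * (A ^ n)) x), w⟫ := by
            rw [hw, inner_sub_left]
        _ = 0 := by rw [hQnw, hJw, sub_self]
    have : w = 0 := inner_self_eq_zero.mp hww
    have := sub_eq_zero.mp (hw ▸ this)
    exact this
  -- Step 2 : the range of J and its orthogonal projection
  set M : Submodule ℂ e.K := LinearMap.range J.toLinearMap with hMdef
  have hJm : ∀ x : H, J x ∈ M := fun x => ⟨x, rfl⟩
  have hMset : (M : Set e.K) = Set.range J := by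
    rw [hMdef, LinearMap.coe_range]
    rfl
  haveI hMcomplete : CompleteSpace M := by
    have hcomp : IsComplete (Set.range J) :=
      J.isometry.isUniformInducing.isComplete_range
    rw [← hMset] at hcomp
    exact hcomp.completeSpace_coe
  set P : e.K →L[ℂ] e.K := M.subtypeL ∘L Submodule.orthogonalProjection M with hPdef
  have hPsa : IsSelfAdjoint P := isSelfAdjoint_starProjection M
  have hPfix : ∀ u : e.K, u ∈ M → P u = u := by
    intro u hu
    have := Submodule.orthogonalProjection_mem_subspace_eq_self (⟨u, hu⟩ : M)
    calc P u = ((Submodule.orthogonalProjection M) u : e.K) := rfl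
      _ = u := by rw [this]
  have hPmem : ∀ u : e.K, P u ∈ M := fun u => (Submodule.orthogonalProjection M u).2
  have hQnM : ∀ u : e.K, u ∈ M → (Q ^ n) u ∈ M := by
    rintro u ⟨x, rfl⟩
    have : J.toLinearMap x = J x := rfl
    rw [this, hQnJ x]
    exact hJm _
  have hPQn : P * Q ^ n = Q ^ n * P := by
    have h1 : P * (Q ^ n * P) = Q ^ n * P := by
      ext u
      simp only [mul_apply_eq_comp]
      exact hPfix _ (hQnM _ (hPmem u))
    have h2 := congrArg star h1
    simp only [star_mul, hPsa.star_eq, (hQksa n).star_eq] at h2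
    -- h2 : (star P * ...) hopefully : P * Q^n * P = P * Q^n
    rw [← mul_assoc] at h1
    calc P * Q ^ n = P * Q ^ n * P := h2.symm
      _ = Q ^ n * P := h1
  have h0Q : (0 : e.K →L[ℂ] e.K) ≤ Q := by
    rw [hQdef]; exact star_mul_self_nonneg N
  have hnz : n ≠ 0 := by omega
  have hPQ : P * Q = Q * P := commute_of_commute_pow_aux h0Q hnz hPQn
  have hQM : ∀ x : H, Q (J x) ∈ M := by
    intro x
    have hc : Q (P (J x)) = P (Q (J x)) := by
      rw [← mul_apply_eq_comp, ← mul_apply_eq_comp, ← hPQ]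
    rw [hPfix _ (hJm x)] at hc
    rw [hc]
    exact hPmem _
  -- Step 3 : Q (J x) = J ((adjoint A * A) x)
  have hQJ : ∀ x : H, Q (J x) = J ((adjoint A * A) x) := by
    intro x
    obtain ⟨z, hz⟩ := hQM x
    have hz' : J z = Q (J x) := hz
    have horth : ∀ y : H, ⟪Q (J x) - J ((adjoint A * A) x), J y⟫ = 0 := by
      intro y
      rw [inner_sub_left, sub_eq_zero]
      have k1 : ⟪Q (J x), J y⟫ = ⟪A x, A y⟫ := by
        have := key 1 x y
        simpa [pow_one] using this
      rw [k1, LinearIsometry.inner_map_map, mul_apply_eq_comp, adjoint_inner_left]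
    have hdiff : Q (J x) - J ((adjoint A * A) x) = J (z - (adjoint A * A) x) := by
      rw [map_sub, hz']
    have h0 := horth (z - (adjoint A * A) x)
    rw [hdiff, LinearIsometry.inner_map_map, inner_self_eq_zero] at h0
    have : Q (J x) - J ((adjoint A * A) x) = 0 := by
      rw [hdiff, h0, map_zero]
    exact sub_eq_zero.mp this
  -- Step 4 : conclusion
  show A * (adjoint A * A) = (adjoint A * A) * A
  ext x
  apply J.injective
  calc J ((A * (adjoint A * A)) x) = J (A ((adjoint A * A) x)) := by rw [mul_apply_eq_comp]
    _ = N (J ((adjoint A * A) x)) := (hNJ _).symm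
    _ = N (Q (J x)) := by rw [hQJ x]
    _ = Q (N (J x)) := by rw [← mul_apply_eq_comp, ← mul_apply_eq_comp, hQN]
    _ = Q (J (A x)) := by rw [hNJ]
    _ = J ((adjoint A * A) (A x)) := hQJ (A x)
    _ = J (((adjoint A * A) * A) x) := by simp [mul_apply]
end

section
/- Every quasinormal bounded operator on a complex Hilbert space is subnormal. -/
open ContinuousLinearMap

universe u

set_option synthInstance.maxHeartbeats 1000000
set_option maxHeartbeats 2000000

section Aux

variable {H : Type u} [NormedAddCommGroup H] [InnerProductSpace ℂ H] [CompleteSpace H]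

lemma aux_cube_nonneg (d : H →L[ℂ] H) (hd : IsSelfAdjoint d) (h3 : 0 ≤ d ^ 3) : 0 ≤ d := by
  rw [StarOrderedRing.nonneg_iff_spectrum_nonneg (R := ℝ) _ (hd.pow 3)] at h3
  rw [StarOrderedRing.nonneg_iff_spectrum_nonneg (R := ℝ) _ hd]
  intro x hx
  have h1 : d ^ 3 = cfc (fun x : ℝ => x ^ 3) d := by
    rw [cfc_pow_id (R := ℝ) d]
  rw [h1, cfc_map_spectrum (fun x : ℝ => x ^ 3) d] at h3
  exact (Odd.pow_nonneg_iff (⟨1, by ring⟩ : Odd 3)).mp (h3 (x ^ 3) ⟨x, hx, rfl⟩)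

end Aux

/-- Every quasinormal bounded operator is subnormal. -/
theorem subnormal_of_quasinormal
    {H : Type u} [NormedAddCommGroup H] [InnerProductSpace ℂ H] [CompleteSpace H]
    (A : H →L[ℂ] H) (hA : Quasinormal A) : Subnormal A := by
  set T : H →L[ℂ] H := adjoint A * A with hTdef
  set S : H →L[ℂ] H := A * adjoint A with hSdef
  have hq : A * T = T * A := hA
  have hT : IsSelfAdjoint T := by
    rw [IsSelfAdjoint, hTdef, star_mul, star_eq_adjoint, star_eq_adjoint, adjoint_adjoint]
  have hS : IsSelfAdjoint S := by
    rw [IsSelfAdjoint, hSdef, star_mul, star_eq_adjoint, star_eq_adjoint, adjoint_adjoint]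
  have hT0 : 0 ≤ T := by simpa [star_eq_adjoint] using star_mul_self_nonneg A
  have hTS : S * S = T * S := by
    calc S * S = A * T * adjoint A := by
          rw [hSdef, hTdef]; noncomm_ring
    _ = T * A * adjoint A := by rw [hq]
    _ = T * S := by rw [hSdef]; noncomm_ring
  have hST : S * T = T * S := by
    have h1 : star (T * S) = S * T := by rw [star_mul, hT.star_eq, hS.star_eq]
    have h2 : star (S * S) = S * S := by rw [star_mul, hS.star_eq]
    calc S * T = star (T * S) := h1.symm
    _ = star (S * S) := by rw [hTS]
    _ = S * S := h2
    _ = T * S := hTS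
  set D : H →L[ℂ] H := T - S with hDdef
  have hD : IsSelfAdjoint D := hT.sub hS
  have hDS : D * S = 0 := by rw [hDdef, sub_mul, hTS, sub_self]
  have hSD : S * D = 0 := by rw [hDdef, mul_sub, hST, hTS, sub_self]
  have hDD : D * D = D * T := by
    have h := mul_sub D T S
    rw [← hDdef] at h
    rw [h, hDS, sub_zero]
  have hD3 : D ^ 3 = D * T * D := by
    rw [pow_succ, pow_two, hDD]
  have hD0 : 0 ≤ D := by
    apply aux_cube_nonneg D hD
    rw [hD3]
    have := star_left_conjugate_nonneg hT0 D
    rwa [star_eq_adjoint, hD.adjoint_eq] at this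
  set B : H →L[ℂ] H := CFC.sqrt D with hBdef
  have hB0 : 0 ≤ B := CFC.sqrt_nonneg (a := D)
  have hBsa : IsSelfAdjoint B := .of_nonneg hB0
  have hB2 : B * B = D := by
    have := CFC.sq_sqrt D hD0
    rwa [pow_two] at this
  have hDA : D * A = 0 := by
    have hSA : S * A = A * T := by rw [hSdef, hTdef]; noncomm_ring
    rw [hDdef, sub_mul, hSA, hq, sub_self]
  have hBA : B * A = 0 := by
    rw [← CStarRing.star_mul_self_eq_zero_iff (B * A)]
    calc star (B * A) * (B * A) = star A * (B * B) * A := by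
          rw [star_mul, hBsa.star_eq]; noncomm_ring
    _ = star A * (D * A) := by rw [hB2]; noncomm_ring
    _ = 0 := by rw [hDA, mul_zero]
  have hAB : adjoint A * B = 0 := by
    have := congrArg star hBA
    rwa [star_mul, hBsa.star_eq, star_zero, star_eq_adjoint] at this
  have hBBS : B * B + S = T := by rw [hB2, hDdef, sub_add_cancel]
  -- the extension space
  let e := WithLp.prodContinuousLinearEquiv 2 ℂ H H
  let N₀ : H × H →L[ℂ] H × H :=
    (A.comp (fst ℂ H H) + B.comp (snd ℂ H H)).prod ((adjoint A).comp (snd ℂ H H))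
  let M₀ : H × H →L[ℂ] H × H :=
    ((adjoint A).comp (fst ℂ H H)).prod (B.comp (fst ℂ H H) + A.comp (snd ℂ H H))
  let N : WithLp 2 (H × H) →L[ℂ] WithLp 2 (H × H) :=
    (e.symm : H × H →L[ℂ] WithLp 2 (H × H)).comp (N₀.comp (e : WithLp 2 (H × H) →L[ℂ] H × H))
  let M : WithLp 2 (H × H) →L[ℂ] WithLp 2 (H × H) :=
    (e.symm : H × H →L[ℂ] WithLp 2 (H × H)).comp (M₀.comp (e : WithLp 2 (H × H) →L[ℂ] H × H))
  have hNx : ∀ x : WithLp 2 (H × H), N x = (WithLp.equiv 2 (H × H)).symm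
      (A x.ofLp.1 + B x.ofLp.2, adjoint A x.ofLp.2) := fun x => rfl
  have hMx : ∀ x : WithLp 2 (H × H), M x = (WithLp.equiv 2 (H × H)).symm
      (adjoint A x.ofLp.1, B x.ofLp.1 + A x.ofLp.2) := fun x => rfl
  have hadj : adjoint N = M := by
    symm
    rw [eq_adjoint_iff]
    intro x y
    rw [hMx, hNx]
    simp only [WithLp.prod_inner_apply]
    have hBIP : ∀ u v : H, (inner ℂ (B u) v : ℂ) = inner ℂ u (B v) := fun u v => by
      nth_rewrite 1 [← hBsa.adjoint_eq]
      exact adjoint_inner_left B v u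
    simp only [WithLp.equiv_symm_apply, WithLp.ofLp_toLp, inner_add_left, inner_add_right,
      adjoint_inner_left, hBIP, adjoint_inner_right]
    ring
  have hABx : ∀ v : H, adjoint A (B v) = 0 := fun v => by
    simpa [mul_apply] using DFunLike.congr_fun hAB v
  have hBAx : ∀ v : H, B (A v) = 0 := fun v => by
    simpa [mul_apply] using DFunLike.congr_fun hBA v
  have hBBSx : ∀ v : H, B (B v) + A (adjoint A v) = T v := fun v => by
    simpa [mul_apply, hSdef] using DFunLike.congr_fun hBBS v
  have hnormal : adjoint N * N = N * adjoint N := by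
    rw [hadj]
    ext x
    show M (N x) = N (M x)
    rw [hMx, hNx, hNx, hMx]
    apply congrArg
    have h1 : adjoint A (A x.ofLp.1 + B x.ofLp.2) = A (adjoint A x.ofLp.1) + B (B x.ofLp.1 + A x.ofLp.2) := by
      rw [map_add, map_add, hABx, hBAx, add_zero, add_zero]
      show T x.ofLp.1 = S x.ofLp.1 + (B * B) x.ofLp.1
      rw [← ContinuousLinearMap.add_apply, add_comm S (B * B), hBBS]
    have h2 : B (A x.ofLp.1 + B x.ofLp.2) + A (adjoint A x.ofLp.2) = adjoint A (B x.ofLp.1 + A x.ofLp.2) := by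
      rw [map_add, map_add, hBAx, hABx, zero_add, zero_add]
      show (B * B) x.ofLp.2 + S x.ofLp.2 = T x.ofLp.2
      rw [← ContinuousLinearMap.add_apply, hBBS]
    exact Prod.ext h1 h2
  refine ⟨⟨WithLp 2 (H × H),
    { toLinearMap := ((WithLp.linearEquiv 2 ℂ (H × H)).symm.comp (LinearMap.inl ℂ H H))
      norm_map' := fun x => by
        rw [WithLp.prod_norm_eq_add (p := 2) (by norm_num)]
        simp
        rw [← Real.rpow_natCast ‖x‖ 2, ← Real.rpow_mul (norm_nonneg x)]
        norm_num }, N, hnormal, fun h => ?_⟩⟩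
  show N ((WithLp.equiv 2 (H × H)).symm (h, 0)) = (WithLp.equiv 2 (H × H)).symm (A h, 0)
  rw [hNx]
  simp
end

section
/- If A and B are positive bounded operators on a complex Hilbert space with B ≤ A, and p ∈ [0,1], then B^p ≤ A^p (Löwner–Heinz inequality). -/
open scoped NNReal ENNReal

section SR
variable {A : Type*} [NormedRing A] [NormedAlgebra ℂ A] [CompleteSpace A]

lemma iSup_nnnorm_diff_zero (s : Set ℂ) :
    (⨆ k ∈ s, (‖k‖₊ : ℝ≥0∞)) = ⨆ k ∈ s \ {0}, (‖k‖₊ : ℝ≥0∞) := by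
  apply le_antisymm
  · refine iSup₂_le fun k hk => ?_
    rcases eq_or_ne k 0 with rfl | hk0
    · simp
    · exact le_iSup₂ (f := fun k (_ : k ∈ s \ {0}) => (‖k‖₊ : ℝ≥0∞)) k ⟨hk, hk0⟩
  · exact iSup₂_le fun k hk => le_iSup₂ (f := fun k (_ : k ∈ s) => (‖k‖₊ : ℝ≥0∞)) k hk.1

lemma spectralRadius_mul_comm (x y : A) :
    spectralRadius ℂ (x * y) = spectralRadius ℂ (y * x) := by
  unfold spectralRadius
  rw [iSup_nnnorm_diff_zero, iSup_nnnorm_diff_zero (spectrum ℂ (y * x)),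
    spectrum.nonzero_mul_comm]

end SR
section Crit
variable {A : Type*} [CStarAlgebra A] [PartialOrder A] [StarOrderedRing A]

lemma isUnit_rpow' {a : Aˣ} (ha : (0:A) ≤ a) (x : ℝ) : IsUnit ((a:A) ^ x) :=
  isUnit_iff_exists.mpr ⟨(a:A) ^ (-x),
    CFC.rpow_mul_rpow_neg x ⟨ha, a.isUnit⟩,
    CFC.rpow_neg_mul_rpow x ⟨ha, a.isUnit⟩⟩

lemma sqrt_rpow_half {b : A} {γ : ℝ} (hγ : 0 ≤ γ) : CFC.sqrt (b ^ γ) = b ^ (γ/2) := by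
  have : γ = ((γ.toNNReal : ℝ)) := (Real.coe_toNNReal γ hγ).symm
  rw [this, CFC.sqrt_rpow_nnreal]

lemma rpow_le_rpow_iff_norm {a : Aˣ} {b : A} (ha : 0 ≤ (a:A)) (hb : 0 ≤ b) {γ : ℝ} (hγ : 0 < γ) :
    b ^ γ ≤ (a:A) ^ γ ↔ ‖b ^ (γ/2) * (a:A) ^ (-(γ/2))‖ ≤ 1 := by
  have h0 : 0 ∉ spectrum ℝ≥0 (a:A) := spectrum.zero_notMem ℝ≥0 a.isUnit
  rw [le_iff_norm_sqrt_mul_rpow _ _ CFC.rpow_nonneg ⟨CFC.rpow_nonneg, isUnit_rpow' ha γ⟩,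
    sqrt_rpow_half hγ.le, CFC.rpow_rpow (a:A) γ _ hγ.ne' ⟨ha, a.isUnit⟩]
  ring_nf
end Crit

section Mid
variable {A : Type*} [CStarAlgebra A] [PartialOrder A] [StarOrderedRing A]

lemma piece_bound {a b : Aˣ} (ha : 0 ≤ (a:A)) (hb : 0 ≤ (b:A)) [Nontrivial A] {t : ℝ}
    (ht : 0 ≤ t) (h : (b:A) ^ t ≤ (a:A) ^ t) :
    ‖(b:A) ^ (t/2) * (a:A) ^ (-(t/2))‖₊ ≤ 1 := by
  rcases eq_or_lt_of_le ht with rfl | ht'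
  · norm_num
    rw [CFC.rpow_zero (b:A) hb, CFC.rpow_zero (a:A) ha, one_mul, nnnorm_one]
  · exact (rpow_le_rpow_iff_norm ha hb ht').mp h

lemma loewner_heinz_midpoint {a b : Aˣ} (ha : 0 ≤ (a:A)) (hb : 0 ≤ (b:A)) {r s : ℝ}
    (hr : 0 ≤ r) (hs : 0 ≤ s)
    (h1 : (b:A) ^ r ≤ (a:A) ^ r) (h2 : (b:A) ^ s ≤ (a:A) ^ s) :
    (b:A) ^ ((r+s)/2) ≤ (a:A) ^ ((r+s)/2) := by
  nontriviality A
  have ha0 : 0 ∉ spectrum ℝ≥0 (a:A) := spectrum.zero_notMem ℝ≥0 a.isUnit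
  have hb0 : 0 ∉ spectrum ℝ≥0 (b:A) := spectrum.zero_notMem ℝ≥0 b.isUnit
  set γ : ℝ := (r+s)/2 with hγdef
  rcases eq_or_lt_of_le (by positivity : (0:ℝ) ≤ γ) with hγ | hγ
  · rw [← hγ, CFC.rpow_zero (b:A) hb, CFC.rpow_zero (a:A) ha]
  rw [rpow_le_rpow_iff_norm ha hb hγ]
  set c : A := (b:A) ^ (γ/2) * (a:A) ^ (-(γ/2)) with hcdef
  set u : A := (a:A) ^ (-(r/2)) * (b:A) ^ (r/2) with hudef
  set v : A := (b:A) ^ (s/2) * (a:A) ^ (-(s/2)) with hvdef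
  have hsa : ∀ (x : A) (t : ℝ), star (x ^ t) = x ^ t := fun x t =>
    (IsSelfAdjoint.of_nonneg CFC.rpow_nonneg)
  have hstar : c * star c = (b:A) ^ (γ/2) * ((a:A) ^ (-γ) * (b:A) ^ (γ/2)) := by
    rw [hcdef, star_mul, hsa, hsa, mul_assoc, ← mul_assoc ((a:A) ^ (-(γ/2))),
      ← CFC.rpow_add a.isUnit, show (-(γ/2) + -(γ/2) : ℝ) = -γ by ring]
  have hasplit : (a:A) ^ (-γ) = (a:A) ^ (-(s/2)) * (a:A) ^ (-(r/2)) := by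
    rw [← CFC.rpow_add a.isUnit]
    congr 1
    rw [hγdef]; ring
  have hbsplit : (b:A) ^ γ = (b:A) ^ (r/2) * (b:A) ^ (s/2) := by
    rw [← CFC.rpow_add b.isUnit]
    congr 1
    rw [hγdef]; ring
  have key : spectralRadius ℂ (c * star c) ≤ 1 := by
    rw [hstar, spectralRadius_mul_comm]
    have e1 : (a:A) ^ (-γ) * (b:A) ^ (γ/2) * (b:A) ^ (γ/2)
        = (a:A) ^ (-(s/2)) * (u * (b:A) ^ (s/2)) := by
      rw [mul_assoc, ← CFC.rpow_add b.isUnit, show γ/2 + γ/2 = γ by ring, hasplit, hbsplit,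
        hudef]
      simp only [mul_assoc]
    rw [e1, spectralRadius_mul_comm]
    have e2 : u * (b:A) ^ (s/2) * (a:A) ^ (-(s/2)) = u * v := by
      rw [hvdef, mul_assoc]
    rw [e2]
    calc spectralRadius ℂ (u * v) ≤ (‖u * v‖₊ : ℝ≥0∞) := spectrum.spectralRadius_le_nnnorm (𝕜 := ℂ) _
      _ ≤ ((‖u‖₊ * ‖v‖₊ : ℝ≥0) : ℝ≥0∞) := by exact_mod_cast ENNReal.coe_le_coe.mpr (nnnorm_mul_le u v)
      _ ≤ 1 := by
          have hu : ‖u‖₊ ≤ 1 := by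
            have : star ((b:A) ^ (r/2) * (a:A) ^ (-(r/2))) = u := by
              rw [star_mul, hsa, hsa, hudef]
            rw [← this, nnnorm_star]
            exact piece_bound ha hb hr h1
          have hv : ‖v‖₊ ≤ 1 := piece_bound ha hb hs h2
          calc ((‖u‖₊ * ‖v‖₊ : ℝ≥0) : ℝ≥0∞) ≤ ((1 * 1 : ℝ≥0) : ℝ≥0∞) := by
                exact_mod_cast mul_le_mul' hu hv
            _ = 1 := by norm_num
  have hnn : (‖c‖₊ : ℝ≥0) * ‖c‖₊ ≤ 1 := by
    have hsa' : IsSelfAdjoint (c * star c) := IsSelfAdjoint.mul_star_self c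
    have : ((‖c‖₊ * ‖c‖₊ : ℝ≥0) : ℝ≥0∞) ≤ 1 := by
      rw [← CStarRing.nnnorm_self_mul_star, ← hsa'.spectralRadius_eq_nnnorm]
      exact key
    exact_mod_cast this
  have : ‖c‖ * ‖c‖ ≤ 1 := by exact_mod_cast hnn
  nlinarith [norm_nonneg c]
end Mid
section P2

lemma abs_exp_sub_one_le' {t : ℝ} : |Real.exp t - 1| ≤ |t| * Real.exp |t| := by
  have hmul : Real.exp t * Real.exp (-t) = 1 := by rw [← Real.exp_add]; simp
  rcases le_total 0 t with h | h
  · rw [abs_of_nonneg h, abs_of_nonneg (sub_nonneg.2 (Real.one_le_exp h))]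
    nlinarith [Real.add_one_le_exp (-t), Real.exp_pos t]
  · rw [abs_of_nonpos h, abs_of_nonpos (sub_nonpos.2 (Real.exp_le_one_iff.mpr h))]
    nlinarith [Real.add_one_le_exp t, Real.one_le_exp (neg_nonneg.2 h)]

lemma real_aux {ε M x q p' : ℝ} (hε : 0 < ε) (hx : x ∈ Set.Icc ε M)
    (hq : q ∈ Set.Icc (0:ℝ) 1) (hp : p' ∈ Set.Icc (0:ℝ) 1) :
    |x ^ q - x ^ p'| ≤ (max 1 M * (max |Real.log ε| |Real.log M| *
      Real.exp (2 * max |Real.log ε| |Real.log M|))) * |q - p'| := by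
  set L := max |Real.log ε| |Real.log M| with hL
  have hx0 : 0 < x := lt_of_lt_of_le hε hx.1
  have hM0 : 0 < M := lt_of_lt_of_le hx0 hx.2
  have hlog : |Real.log x| ≤ L :=
    abs_le_max_abs_abs ((Real.log_le_log_iff hε hx0).mpr hx.1)
      ((Real.log_le_log_iff hx0 hM0).mpr hx.2)
  have hL0 : 0 ≤ L := le_trans (abs_nonneg _) (le_max_left _ _)
  have hxp : x ^ p' ≤ max 1 M := by
    rcases le_total x 1 with h | h
    · exact le_max_of_le_left (Real.rpow_le_one hx0.le h hp.1)
    · refine le_max_of_le_right ?_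
      calc x ^ p' ≤ x ^ (1:ℝ) := Real.rpow_le_rpow_of_exponent_le h hp.2
        _ = x := Real.rpow_one x
        _ ≤ M := hx.2
  have hqp : |q - p'| ≤ 2 := by
    rw [abs_sub_le_iff]
    constructor <;> nlinarith [hq.1, hq.2, hp.1, hp.2]
  have key : x ^ q - x ^ p' = x ^ p' * (Real.exp ((q - p') * Real.log x) - 1) := by
    rw [Real.rpow_def_of_pos hx0, Real.rpow_def_of_pos hx0, mul_sub, mul_one,
      ← Real.exp_add]
    ring_nf
  have habs : |(q - p') * Real.log x| ≤ |q - p'| * L := by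
    rw [abs_mul]
    exact mul_le_mul_of_nonneg_left hlog (abs_nonneg _)
  have h2L : |(q - p') * Real.log x| ≤ 2 * L := habs.trans (by nlinarith)
  calc |x ^ q - x ^ p'| = x ^ p' * |Real.exp ((q - p') * Real.log x) - 1| := by
        rw [key, abs_mul, abs_of_nonneg (Real.rpow_nonneg hx0.le _)]
    _ ≤ (max 1 M) * (|(q - p') * Real.log x| * Real.exp |(q - p') * Real.log x|) := by
        apply mul_le_mul hxp abs_exp_sub_one_le' (abs_nonneg _)
          (le_trans zero_le_one (le_max_left _ _))
    _ ≤ (max 1 M) * ((|q - p'| * L) * Real.exp (2 * L)) := by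
        apply mul_le_mul_of_nonneg_left _ (le_trans zero_le_one (le_max_left _ _))
        exact mul_le_mul habs (Real.exp_le_exp.mpr h2L) (Real.exp_pos _).le
          (by positivity)
    _ = (max 1 M * (L * Real.exp (2 * L))) * |q - p'| := by ring

end P2
section P3
open Filter Topology

variable {A : Type*} [CStarAlgebra A] [PartialOrder A] [StarOrderedRing A]

lemma cfc_real_rpow (a : A) (ha : 0 ≤ a) (p : ℝ) : cfc (fun x : ℝ => x ^ p) a = a ^ p := by
  rw [CFC.rpow_def, cfc_nnreal_eq_real _ _ ha]
  apply cfc_congr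
  intro x hx
  have hx' : 0 ≤ x := spectrum_nonneg_of_nonneg ha hx
  simp [NNReal.coe_rpow, Real.coe_toNNReal x hx']

lemma tendsto_rpow_of_abs_sub [Nontrivial A] {a : Aˣ} (ha : 0 ≤ (a:A)) {q : ℕ → ℝ} {p : ℝ}
    (hq : ∀ n, q n ∈ Set.Icc (0:ℝ) 1) (hp : p ∈ Set.Icc (0:ℝ) 1)
    (hconv : Tendsto (fun n => |q n - p|) atTop (𝓝 0)) :
    Tendsto (fun n => (a:A) ^ (q n)) atTop (𝓝 ((a:A) ^ p)) := by
  have h0K : (0:ℝ) ∉ spectrum ℝ (a:A) := spectrum.zero_notMem ℝ a.isUnit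
  have hsa : IsSelfAdjoint (a:A) := IsSelfAdjoint.of_nonneg ha
  have hcont : ∀ t : ℝ, ContinuousOn (fun x : ℝ => x ^ t) (spectrum ℝ (a:A)) := fun t x hx =>
    (Real.continuousAt_rpow_const x t (Or.inl (ne_of_mem_of_not_mem hx h0K))).continuousWithinAt
  rcases (spectrum ℝ (a:A)).eq_empty_or_nonempty with hK | hK
  · have heq : ∀ t : ℝ, (a:A) ^ t = (a:A) ^ p := by
      intro t
      rw [← cfc_real_rpow (a:A) ha, ← cfc_real_rpow (a:A) ha]
      apply cfc_congr
      intro x hx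
      rw [hK] at hx
      exact absurd hx (Set.notMem_empty x)
    simp only [heq]
    exact tendsto_const_nhds
  · have hKc : IsCompact (spectrum ℝ (a:A)) := spectrum.isCompact (a:A)
    set K := spectrum ℝ (a:A) with hKdef
    set ε := sInf K with hεdef
    have hεK : ε ∈ K := hKc.sInf_mem hK
    have hε : 0 < ε := lt_of_le_of_ne (spectrum_nonneg_of_nonneg ha hεK)
      (Ne.symm (ne_of_mem_of_not_mem hεK h0K))
    set M := ‖(a:A)‖ with hMdef
    have hxM : ∀ x ∈ K, x ≤ M := fun x hx =>
      (le_abs_self x).trans (spectrum.norm_le_norm_of_mem hx)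
    set C := max 1 M * (max |Real.log ε| |Real.log M| *
      Real.exp (2 * max |Real.log ε| |Real.log M|)) with hCdef
    have hbd : ∀ n, ‖(a:A) ^ (q n) - (a:A) ^ p‖ ≤ C * |q n - p| := by
      intro n
      rw [← cfc_real_rpow (a:A) ha, ← cfc_real_rpow (a:A) ha,
        ← cfc_sub _ _ (a:A) (hcont _) (hcont _)]
      apply norm_cfc_le (by positivity)
      intro x hx
      have := real_aux hε ⟨csInf_le hKc.bddBelow hx, hxM x hx⟩ (hq n) hp
      simpa [Real.norm_eq_abs] using this
    rw [tendsto_iff_norm_sub_tendsto_zero]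
    apply squeeze_zero (fun n => norm_nonneg _) hbd
    simpa using hconv.const_mul C

lemma dyadic_le {a b : Aˣ} (ha : 0 ≤ (a:A)) (hb : 0 ≤ (b:A)) (hba : (b:A) ≤ (a:A)) :
    ∀ n k : ℕ, k ≤ 2^n → (b:A) ^ ((k : ℝ)/2^n) ≤ (a:A) ^ ((k:ℝ)/2^n) := by
  intro n
  induction n with
  | zero =>
    intro k hk
    interval_cases k
    · norm_num
      rw [CFC.rpow_zero (b:A) hb, CFC.rpow_zero (a:A) ha]
    · norm_num
      rw [CFC.rpow_one (b:A) hb, CFC.rpow_one (a:A) ha]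
      exact hba
  | succ n ih =>
    intro k hk
    have h2 : (2:ℕ)^(n+1) = 2 * 2^n := by ring
    rcases Nat.even_or_odd k with ⟨m, rfl⟩ | ⟨m, rfl⟩
    · have e : ((m + m : ℕ):ℝ)/2^(n+1) = (m:ℝ)/2^n := by push_cast; ring
      rw [e]
      exact ih m (by omega)
    · have h1 : m ≤ 2^n := by omega
      have h1' : m + 1 ≤ 2^n := by omega
      have e : ((2*m+1 : ℕ):ℝ)/2^(n+1) = ((m:ℝ)/2^n + ((m+1:ℕ):ℝ)/2^n)/2 := by
        push_cast; ring
      rw [e]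
      exact loewner_heinz_midpoint ha hb (by positivity) (by positivity)
        (ih m h1) (ih (m+1) h1')

lemma unit_case {a b : Aˣ} (ha : 0 ≤ (a:A)) (hb : 0 ≤ (b:A)) (hba : (b:A) ≤ (a:A))
    {p : ℝ} (hp0 : 0 ≤ p) (hp1 : p ≤ 1) : (b:A) ^ p ≤ (a:A) ^ p := by
  nontriviality A
  set q : ℕ → ℝ := fun n => (⌊p * 2^n⌋₊ : ℝ) / 2^n with hqdef
  have hq : ∀ n, q n ∈ Set.Icc (0:ℝ) 1 := by
    intro n
    constructor
    · positivity
    · rw [div_le_one (by positivity)]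
      have : (⌊p * 2^n⌋₊ : ℝ) ≤ p * 2^n := Nat.floor_le (by positivity)
      nlinarith [pow_pos (by norm_num : (0:ℝ) < 2) n]
  have habs : Tendsto (fun n => |q n - p|) atTop (𝓝 0) := by
    have hb' : ∀ n, |q n - p| ≤ (1/2)^n := by
      intro n
      rw [abs_sub_le_iff]
      have h2n : (0:ℝ) < 2^n := by positivity
      have hfl : (⌊p * 2^n⌋₊ : ℝ) ≤ p * 2^n := Nat.floor_le (by positivity)
      have hfl2 : p * 2^n < (⌊p * 2^n⌋₊ : ℝ) + 1 := Nat.lt_floor_add_one _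
      constructor
      · rw [hqdef]
        simp only
        rw [div_sub' h2n.ne', div_le_iff₀ h2n]
        have hprod : (1/2:ℝ)^n * 2^n = 1 := by rw [← mul_pow]; norm_num
        push_cast
        nlinarith
      · rw [hqdef]
        simp only
        rw [sub_div' h2n.ne', div_le_iff₀ h2n]
        have hprod : (1/2:ℝ)^n * 2^n = 1 := by rw [← mul_pow]; norm_num
        push_cast
        nlinarith
    apply squeeze_zero (fun n => abs_nonneg _) hb'
    exact tendsto_pow_atTop_nhds_zero_of_lt_one (by norm_num) (by norm_num)
  have hle : ∀ n, (b:A) ^ (q n) ≤ (a:A) ^ (q n) := by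
    intro n
    have hk : ⌊p * 2^n⌋₊ ≤ 2^n := by
      apply Nat.floor_le_of_le
      push_cast
      nlinarith [pow_pos (by norm_num : (0:ℝ) < 2) n]
    have := dyadic_le ha hb hba n ⌊p * 2^n⌋₊ hk
    simpa [hqdef] using this
  exact le_of_tendsto_of_tendsto' (tendsto_rpow_of_abs_sub hb hq ⟨hp0, hp1⟩ habs)
    (tendsto_rpow_of_abs_sub ha hq ⟨hp0, hp1⟩ habs) hle

end P3


open Filter Topology
section P4
variable {A : Type*} [CStarAlgebra A] [PartialOrder A] [StarOrderedRing A]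

lemma algMap_nonneg' (a : A) (ha : 0 ≤ a) {ε : ℝ} (h : 0 ≤ ε) : 0 ≤ algebraMap ℝ A ε := by
  have hsa : IsSelfAdjoint a := IsSelfAdjoint.of_nonneg ha
  rw [← cfc_const ε a hsa]
  exact cfc_nonneg (fun x _ => h)

lemma real_eps {x ε p : ℝ} (hx : 0 ≤ x) (hε : 0 ≤ ε) (hp0 : 0 < p) (hp1 : p ≤ 1) :
    |(x + ε) ^ p - x ^ p| ≤ ε ^ p := by
  have h1 : x ^ p ≤ (x + ε) ^ p := Real.rpow_le_rpow hx (by linarith) hp0.le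
  rw [abs_of_nonneg (by linarith)]
  have h2 : (x + ε) ^ p ≤ x ^ p + ε ^ p := by
    have h := NNReal.rpow_add_le_add_rpow x.toNNReal ε.toNNReal hp0.le hp1
    have := NNReal.coe_le_coe.mpr h
    push_cast [← Real.toNNReal_add hx hε, Real.coe_toNNReal _ (by linarith : (0:ℝ) ≤ x + ε),
      Real.coe_toNNReal _ hx, Real.coe_toNNReal _ hε] at this
    exact this
  linarith

lemma cfc_eps_eq {a : A} (ha : 0 ≤ a) {p ε : ℝ} (hε : 0 < ε) (hp0 : 0 < p) :
    cfc (fun x : ℝ => x ^ p) (a + algebraMap ℝ A ε) = cfc (fun x : ℝ => (x + ε) ^ p) a := by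
  have hsa : IsSelfAdjoint a := IsSelfAdjoint.of_nonneg ha
  have h1 : a + algebraMap ℝ A ε = cfc (fun x : ℝ => x + ε) a := by
    have h1' := cfc_add_const ε (id : ℝ → ℝ) a continuousOn_id hsa
    rw [cfc_id ℝ a] at h1'
    simp only [id_eq] at h1'
    exact h1'.symm
  rw [h1, ← cfc_comp' (fun x : ℝ => x ^ p) (fun x : ℝ => x + ε) a ?hg ?hf hsa]
  case hg =>
    intro x hx
    obtain ⟨y, hy, rfl⟩ := hx
    have hy0 : 0 ≤ y := spectrum_nonneg_of_nonneg ha hy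
    exact (Real.continuousAt_rpow_const _ p (Or.inl (by positivity))).continuousWithinAt
  case hf => fun_prop

lemma tendsto_eps {a : A} (ha : 0 ≤ a) {p : ℝ} (hp0 : 0 < p) (hp1 : p ≤ 1) :
    Tendsto (fun k : ℕ => cfc (fun x : ℝ => x ^ p) (a + algebraMap ℝ A (1/(k+1) : ℝ)))
      atTop (𝓝 (cfc (fun x : ℝ => x ^ p) a)) := by
  have hsa : IsSelfAdjoint a := IsSelfAdjoint.of_nonneg ha
  have hcont : ContinuousOn (fun x : ℝ => x ^ p) (spectrum ℝ a) := fun x hx =>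
    (Real.continuousAt_rpow_const _ p (Or.inr hp0.le)).continuousWithinAt
  have hbd : ∀ k : ℕ, ‖cfc (fun x : ℝ => x ^ p) (a + algebraMap ℝ A (1/(k+1) : ℝ))
      - cfc (fun x : ℝ => x ^ p) a‖ ≤ (1/(k+1) : ℝ) ^ p := by
    intro k
    have hεk : (0:ℝ) < 1/(k+1) := by positivity
    rw [cfc_eps_eq ha hεk hp0]
    have hconteps : ContinuousOn (fun x : ℝ => (x + (1/(k+1):ℝ)) ^ p) (spectrum ℝ a) := by
      intro x hx
      have hx0 : 0 ≤ x := spectrum_nonneg_of_nonneg ha hx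
      exact ((Real.continuousAt_rpow_const _ p (Or.inl (by positivity))).comp
        (by fun_prop)).continuousWithinAt
    rw [← cfc_sub _ _ a hconteps hcont]
    apply norm_cfc_le (by positivity)
    intro x hx
    have hx0 : 0 ≤ x := spectrum_nonneg_of_nonneg ha hx
    simpa [Real.norm_eq_abs] using real_eps hx0 hεk.le hp0 hp1
  rw [tendsto_iff_norm_sub_tendsto_zero]
  apply squeeze_zero (fun n => norm_nonneg _) hbd
  have h0 : Tendsto (fun k : ℕ => (1/(k+1) : ℝ)) atTop (𝓝 0) :=
    tendsto_one_div_add_atTop_nhds_zero_nat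
  have := ((Real.continuousAt_rpow_const 0 p (Or.inr hp0.le)).tendsto).comp h0
  simpa [Real.zero_rpow hp0.ne', Function.comp_def] using this
end P4


section Main
variable {A : Type*} [CStarAlgebra A] [PartialOrder A] [StarOrderedRing A]

lemma loewner_heinz_abstract (a b : A) (ha : 0 ≤ a) (hb : 0 ≤ b) (hba : b ≤ a)
    {p : ℝ} (hp0 : 0 ≤ p) (hp1 : p ≤ 1) :
    cfc (fun x : ℝ => x ^ p) b ≤ cfc (fun x : ℝ => x ^ p) a := by
  rcases eq_or_lt_of_le hp0 with rfl | hp0'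
  · rw [cfc_real_rpow b hb 0, cfc_real_rpow a ha 0, CFC.rpow_zero b hb, CFC.rpow_zero a ha]
  have hle : ∀ k : ℕ, cfc (fun x : ℝ => x ^ p) (b + algebraMap ℝ A (1/(k+1) : ℝ))
      ≤ cfc (fun x : ℝ => x ^ p) (a + algebraMap ℝ A (1/(k+1) : ℝ)) := by
    intro k
    have hεk : (0:ℝ) < 1/(k+1) := by positivity
    have halg0 : (0:A) ≤ algebraMap ℝ A (1/(k+1) : ℝ) := algMap_nonneg' a ha hεk.le
    have halgu : IsUnit (algebraMap ℝ A (1/(k+1) : ℝ)) :=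
      (isUnit_iff_ne_zero.mpr hεk.ne').map (algebraMap ℝ A)
    have hua : IsUnit (a + algebraMap ℝ A (1/(k+1) : ℝ)) := by
      refine CStarAlgebra.isUnit_of_le (algebraMap ℝ A (1/(k+1) : ℝ)) ?_ ⟨halg0, halgu⟩
      rw [le_add_iff_nonneg_left]
      exact ha
    have hub : IsUnit (b + algebraMap ℝ A (1/(k+1) : ℝ)) := by
      refine CStarAlgebra.isUnit_of_le (algebraMap ℝ A (1/(k+1) : ℝ)) ?_ ⟨halg0, halgu⟩
      rw [le_add_iff_nonneg_left]
      exact hb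
    have h0a : 0 ≤ a + algebraMap ℝ A (1/(k+1) : ℝ) := add_nonneg ha halg0
    have h0b : 0 ≤ b + algebraMap ℝ A (1/(k+1) : ℝ) := add_nonneg hb halg0
    have hba' : (hub.unit : A) ≤ (hua.unit : A) := by
      simp only [IsUnit.unit_spec]
      exact add_le_add_left hba _
    have := unit_case (a := hua.unit) (b := hub.unit)
      (by simpa using h0a) (by simpa using h0b) hba' hp0 hp1
    simp only [IsUnit.unit_spec] at this
    rw [← cfc_real_rpow _ h0b p, ← cfc_real_rpow _ h0a p] at this
    exact this
  exact le_of_tendsto_of_tendsto' (tendsto_eps hb hp0' hp1) (tendsto_eps ha hp0' hp1) hle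

end Main

open ContinuousLinearMap



open ContinuousLinearMap

/-- Löwner–Heinz inequality: if `0 ≤ B ≤ A` and `p ∈ [0,1]`, then `B^p ≤ A^p`. -/
theorem loewner_heinz
    {H : Type*} [NormedAddCommGroup H] [InnerProductSpace ℂ H] [CompleteSpace H]
    (A B : H →L[ℂ] H) (hA : 0 ≤ A) (hB : 0 ≤ B) (hBA : B ≤ A)
    (p : ℝ) (hp0 : 0 ≤ p) (hp1 : p ≤ 1) :
    cfc (fun x : ℝ => x ^ p) B ≤ cfc (fun x : ℝ => x ^ p) A := by
  exact loewner_heinz_abstract A B hA hB hBA hp0 hp1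
end

section
/- Let N be a normal bounded operator on a Hilbert space K, let H be a closed subspace of K invariant under N, let A = N|_H, and let P be the orthogonal projection of K onto H. Then P (N*N)^k P = P N^{*k} N^k P for all nonnegative integers k, and the compression P (N*N)^k P restricted to H equals A^{*k} A^k. -/
open ContinuousLinearMap

/-- If `N` is normal on `K`, `S` is a closed `N`-invariant subspace, `A = N|_S` and `P` is
the orthogonal projection onto `S`, then `P (N*N)^k P = P N^{*k} N^k P`, and the compression
`P (N*N)^k P` restricted to `S` equals `A^{*k} A^k`. -/
theorem compression_powers_of_normal_extension
    {K : Type*} [NormedAddCommGroup K] [InnerProductSpace ℂ K] [CompleteSpace K]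
    (N : K →L[ℂ] K) (hN : adjoint N * N = N * adjoint N)
    (S : Submodule ℂ K) [CompleteSpace S] (hinv : ∀ x ∈ S, N x ∈ S)
    (A : S →L[ℂ] S) (hA : ∀ x : S, (A x : K) = N x)
    (P : K →L[ℂ] K) (hP : P = S.subtypeL ∘L S.orthogonalProjectionOnto) (k : ℕ) :
    P * (adjoint N * N) ^ k * P = P * (adjoint N) ^ k * N ^ k * P ∧
      ∀ x : S, S.orthogonalProjectionOnto (((adjoint N * N) ^ k) (x : K))
        = ((adjoint A) ^ k * A ^ k) x := by
  have hcomm : Commute (adjoint N) N := hN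
  have hpow : (adjoint N * N) ^ k = (adjoint N) ^ k * N ^ k := hcomm.mul_pow k
  -- N* maps Sᗮ to Sᗮ
  have hstar_orth : ∀ z ∈ Sᗮ, adjoint N z ∈ Sᗮ := by
    intro z hz
    rw [Submodule.mem_orthogonal] at hz ⊢
    intro u hu
    rw [adjoint_inner_right]
    exact hz _ (hinv u hu)
  have hstar_orth_pow : ∀ n : ℕ, ∀ z ∈ Sᗮ, ((adjoint N) ^ n) z ∈ Sᗮ := by
    intro n
    induction n with
    | zero => intro z hz; simpa using hz
    | succ n ih =>
        intro z hz
        rw [pow_succ, mul_apply_eq_comp]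
        exact ih _ (hstar_orth z hz)
  -- A^k agrees with N^k on S
  have hApow : ∀ n : ℕ, ∀ x : S, ((A ^ n) x : K) = (N ^ n) (x : K) := by
    intro n
    induction n with
    | zero => intro x; simp
    | succ n ih =>
        intro x
        rw [pow_succ, pow_succ, mul_apply_eq_comp, mul_apply_eq_comp, ih, hA]
  -- projection of N* on S is A*
  have hadj1 : ∀ y : S, S.orthogonalProjectionOnto (adjoint N (y : K)) = adjoint A y := by
    intro y
    apply ext_inner_left ℂ
    intro v
    rw [Submodule.inner_orthogonalProjectionOnto_eq_of_mem_left, adjoint_inner_right, adjoint_inner_right,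
      ← hA, Submodule.coe_inner]
  -- projection of (N*)^n on S is (A*)^n
  have hadjpow : ∀ n : ℕ, ∀ y : S, S.orthogonalProjectionOnto (((adjoint N) ^ n) (y : K))
      = ((adjoint A) ^ n) y := by
    intro n
    induction n with
    | zero => intro y; simp
    | succ n ih =>
        intro y
        rw [pow_succ, mul_apply_eq_comp]
        have hdecomp : adjoint N (y : K)
            = ((S.orthogonalProjectionOnto (adjoint N (y : K)) : K))
              + (adjoint N (y : K) - (S.orthogonalProjectionOnto (adjoint N (y : K)) : K)) := by
          abel
        have hw : adjoint N (y : K) - (S.orthogonalProjectionOnto (adjoint N (y : K)) : K) ∈ Sᗮ :=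
          Submodule.sub_starProjection_mem_orthogonal (K := S) _
        rw [hdecomp, map_add, map_add]
        rw [Submodule.orthogonalProjectionOnto_apply_of_mem_orthogonal
          (hstar_orth_pow n _ hw), add_zero, ih, hadj1, pow_succ, mul_apply_eq_comp]
  constructor
  · rw [hpow]; noncomm_ring
  · intro x
    rw [hpow, mul_apply_eq_comp, mul_apply_eq_comp, ← hApow]
    exact hadjpow k (A ^ k • x)
end

section
/- Let N be a normal bounded operator on a Hilbert space K, H a closed N-invariant subspace, A = N|_H, P the orthogonal projection onto H, and n ≥ 1, κ ≥ 2 integers. If A^{*nκ} A^{nκ} = (A^{*n} A^n)^κ, then P (N*N)^n P = (P (N*N)^{κn} P)^{1/κ}. -/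
open ContinuousLinearMap

set_option maxHeartbeats 1000000

/-- If `N` is normal on `K`, `S` a closed `N`-invariant subspace, `A = N|_S`, `P` the
orthogonal projection onto `S`, `n ≥ 1`, `κ ≥ 2`, and `A^{*nκ} A^{nκ} = (A^{*n} A^n)^κ`,
then `P (N*N)^n P = (P (N*N)^{κn} P)^{1/κ}`. -/
theorem compression_power_eq_root_of_compression
    {K : Type*} [NormedAddCommGroup K] [InnerProductSpace ℂ K] [CompleteSpace K]
    (N : K →L[ℂ] K) (hN : adjoint N * N = N * adjoint N)
    (S : Submodule ℂ K) [CompleteSpace S] (hinv : ∀ x ∈ S, N x ∈ S)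
    (A : S →L[ℂ] S) (hA : ∀ x : S, (A x : K) = N x)
    (P : K →L[ℂ] K) (hP : P = S.subtypeL ∘L S.orthogonalProjection)
    (n κ : ℕ) (hn : 1 ≤ n) (hκ : 2 ≤ κ)
    (hmom : (adjoint A) ^ (n * κ) * A ^ (n * κ) = ((adjoint A) ^ n * A ^ n) ^ κ) :
    P * (adjoint N * N) ^ n * P =
      cfc (fun x : ℝ => x ^ ((κ : ℝ)⁻¹)) (P * (adjoint N * N) ^ (κ * n) * P) := by
  classical
  -- the "lift" of an operator on S to an operator on K
  set L : (S →L[ℂ] S) → (K →L[ℂ] K) :=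
    fun T => S.subtypeL ∘L T ∘L (S.orthogonalProjection : K →L[ℂ] S) with hL
  have hAm : ∀ (m : ℕ) (x : S), ((A ^ m) x : K) = (N ^ m) x := by
    intro m
    induction m with
    | zero => intro x; simp
    | succ m ih =>
      intro x
      rw [pow_succ, pow_succ]
      calc ((A ^ m) (A x) : K) = (N ^ m) ((A x : K)) := ih (A x)
        _ = (N ^ m) (N x) := by rw [hA]
        _ = ((N ^ m) * N) x := rfl
  -- self-adjointness of P
  have hadjpow : ∀ m : ℕ, (adjoint A) ^ m = adjoint (A ^ m) := by
    intro m
    rw [← star_eq_adjoint, ← star_eq_adjoint, star_pow]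
  have hPsa : adjoint P = P := by
    rw [hP]; exact (isSelfAdjoint_starProjection S)
  -- key identity
  have key : ∀ m : ℕ, P * (adjoint N * N) ^ m * P = L ((adjoint A) ^ m * A ^ m) := by
    intro m
    have hcomm : (adjoint N * N) ^ m = adjoint (N ^ m) * N ^ m := by
      have hc : Commute (adjoint N) N := hN
      rw [hc.mul_pow, ← star_eq_adjoint, ← star_eq_adjoint, star_pow]
    ext x
    refine ext_inner_right ℂ fun y => ?_
    have hx : (P * (adjoint N * N) ^ m * P) x
        = P ((adjoint (N ^ m)) ((N ^ m) (P x))) := by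
      simp [hcomm, mul_apply]
    rw [hx]
    have hPy : ∀ z : K, (inner ℂ (P z) y : ℂ) = inner ℂ z (P y) := by
      intro z
      nth_rewrite 1 [← hPsa]
      exact adjoint_inner_left P y z
    have hPx : P x = ((S.orthogonalProjection x : S) : K) := by rw [hP]; rfl
    have hPy' : P y = ((S.orthogonalProjection y : S) : K) := by rw [hP]; rfl
    calc (inner ℂ (P ((adjoint (N ^ m)) ((N ^ m) (P x)))) y : ℂ)
        = inner ℂ ((adjoint (N ^ m)) ((N ^ m) (P x))) (P y) := hPy _
      _ = inner ℂ ((N ^ m) (P x)) ((N ^ m) (P y)) := by rw [adjoint_inner_left]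
      _ = inner ℂ (((A ^ m) (S.orthogonalProjection x) : K))
            (((A ^ m) (S.orthogonalProjection y) : K)) := by
          rw [hPx, hPy', hAm, hAm]
      _ = (inner ℂ ((A ^ m) (S.orthogonalProjection x))
            ((A ^ m) (S.orthogonalProjection y)) : ℂ) := (S.coe_inner _ _).symm
      _ = inner ℂ (((adjoint A) ^ m * A ^ m) (S.orthogonalProjection x))
            (S.orthogonalProjection y : S) := by
          rw [hadjpow, mul_apply_eq_comp, adjoint_inner_left]
      _ = inner ℂ ((((adjoint A) ^ m * A ^ m) (S.orthogonalProjection x) : S) : K) y := by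
          rw [Submodule.inner_orthogonalProjection_eq_of_mem_left]
      _ = inner ℂ ((L ((adjoint A) ^ m * A ^ m)) x) y := rfl
  -- multiplicativity of L
  have hLmul : ∀ T₁ T₂ : S →L[ℂ] S, L T₁ * L T₂ = L (T₁ * T₂) := by
    intro T₁ T₂
    ext x
    simp [hL, mul_apply, Submodule.orthogonalProjection_mem_subspace_eq_self]
  have hLpow : ∀ (T : S →L[ℂ] S) (k : ℕ), 1 ≤ k → (L T) ^ k = L (T ^ k) := by
    intro T k hk
    induction k with
    | zero => omega
    | succ k ih =>
      rcases Nat.eq_or_lt_of_le hk with h | h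
      · simp [← h]
      · rw [pow_succ, ih (by omega), hLmul, ← pow_succ]
  -- positivity of a
  set a : K →L[ℂ] K := P * (adjoint N * N) ^ n * P with ha
  have hapos : 0 ≤ a := by
    rw [ContinuousLinearMap.nonneg_iff_isPositive]
    constructor
    · change (a : K →ₗ[ℂ] K).IsSymmetric
      intro x y
      rw [ha, key n]
      calc (inner ℂ ((L ((adjoint A) ^ n * A ^ n)) x) y : ℂ)
          = inner ℂ (((((adjoint A) ^ n * A ^ n) (S.orthogonalProjection x)) : S) : K) y := rfl
        _ = inner ℂ (((adjoint A) ^ n * A ^ n) (S.orthogonalProjection x))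
              (S.orthogonalProjection y : S) := by
            rw [← Submodule.inner_orthogonalProjection_eq_of_mem_left]
        _ = inner ℂ ((A ^ n) (S.orthogonalProjection x)) ((A ^ n) (S.orthogonalProjection y)) := by
            rw [hadjpow, mul_apply_eq_comp, adjoint_inner_left]
        _ = inner ℂ (S.orthogonalProjection x : S)
              (((adjoint A) ^ n * A ^ n) (S.orthogonalProjection y)) := by
            rw [hadjpow, mul_apply_eq_comp, adjoint_inner_right]
        _ = inner ℂ x ((((((adjoint A) ^ n * A ^ n) (S.orthogonalProjection y)) : S) : K)) := by
            rw [Submodule.inner_orthogonalProjection_eq_of_mem_right]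
        _ = inner ℂ x ((L ((adjoint A) ^ n * A ^ n)) y) := rfl
    · intro x
      rw [ContinuousLinearMap.reApplyInnerSelf_apply, ha, key n]
      have h1 : (L ((adjoint A) ^ n * A ^ n)) x
          = ((((adjoint A) ^ n * A ^ n) (S.orthogonalProjection x) : S) : K) := rfl
      have h2 : (inner ℂ ((L ((adjoint A) ^ n * A ^ n)) x) x : ℂ)
          = inner ℂ ((A ^ n) (S.orthogonalProjection x)) ((A ^ n) (S.orthogonalProjection x)) := by
        rw [h1, ← Submodule.inner_orthogonalProjection_eq_of_mem_left, hadjpow, mul_apply_eq_comp,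
          adjoint_inner_left]
      rw [h2]
      exact inner_self_nonneg
  -- the power identity
  have hκ1 : 1 ≤ κ := by omega
  have hκ0 : κ ≠ 0 := by omega
  have hpowk : a ^ κ = P * (adjoint N * N) ^ (κ * n) * P := by
    rw [ha, key n, hLpow _ κ hκ1, ← hmom, key (κ * n), Nat.mul_comm κ n]
  -- conclude via cfc
  rw [← hpowk]
  have hsa : IsSelfAdjoint a := hapos.isSelfAdjoint
  have hcont : Continuous (fun x : ℝ => x ^ ((κ : ℝ)⁻¹)) :=
    Real.continuous_rpow_const (by positivity)
  rw [← cfc_comp_pow (fun x : ℝ => x ^ ((κ : ℝ)⁻¹)) κ a hcont.continuousOn hsa]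
  rw [cfc_congr (g := fun x : ℝ => x) ?_, cfc_id' ℝ a hsa]
  intro x hx
  exact Real.pow_rpow_inv_natCast (spectrum_nonneg_of_nonneg hapos hx) hκ0
end

section
/- Let F be a semispectral Borel measure on [0,∞) with values in bounded operators on a Hilbert space H, let n ≥ 1, and let ψ_n(x) = x^n. If E is a spectral measure on [0,∞) such that ∫ x^k dE(x) = ∫ x^k d(F ∘ ψ_n^{-1})(x) for all nonnegative integers k, and F ∘ ψ_n^{-1} has compact support, then E = F ∘ ψ_n^{-1}, and consequently F is a spectral measure. -/
open ContinuousLinearMap MeasureTheory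

/-- A semispectral (positive-operator-valued) measure on a measurable space `X`, acting on a
complex Hilbert space `H`. For each vector `h`, the set function `Δ ↦ ⟨F(Δ)h, h⟩` is given by
a (finite, positive) Borel measure, and `F(X) = I`. -/
structure SemispectralMeasure (X : Type*) [MeasurableSpace X]
    (H : Type*) [NormedAddCommGroup H] [InnerProductSpace ℂ H] [CompleteSpace H] where
  /-- the operator-valued set function -/
  toFun : Set X → H →L[ℂ] H
  /-- the scalar measure `⟨F(·)h, h⟩` associated with a vector `h` -/
  measure : H → Measure X
  finite : ∀ h : H, IsFiniteMeasure (measure h)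
  eval : ∀ (h : H) (Δ : Set X), MeasurableSet Δ →
    (inner ℂ (toFun Δ h) h : ℂ) = ((measure h Δ).toReal : ℂ)
  total : toFun Set.univ = 1

/-- A semispectral measure is spectral if its values (on Borel sets) are orthogonal
projections. -/
def SemispectralMeasure.IsSpectral {X : Type*} [MeasurableSpace X]
    {H : Type*} [NormedAddCommGroup H] [InnerProductSpace ℂ H] [CompleteSpace H]
    (F : SemispectralMeasure X H) : Prop :=
  ∀ Δ : Set X, MeasurableSet Δ → IsSelfAdjoint (F.toFun Δ) ∧ IsIdempotentElem (F.toFun Δ)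

variable {H : Type*} [NormedAddCommGroup H] [InnerProductSpace ℂ H] [CompleteSpace H]


open Set Filter Topology

set_option linter.unusedSectionVars false

lemma integrable_of_bound_on {μ : Measure ℝ} [IsFiniteMeasure μ] {s : Set ℝ} (hs : μ sᶜ = 0)
    {f : ℝ → ℝ} (hf : AEStronglyMeasurable f μ) {C : ℝ} (hC : ∀ x ∈ s, |f x| ≤ C) :
    Integrable f μ := by
  have hae : ∀ᵐ x ∂μ, x ∈ s := by
    rw [ae_iff]
    exact hs
  exact (integrable_const C).mono' hf (hae.mono fun x hx => by simpa using hC x hx)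

lemma integrable_pow_of_support {μ : Measure ℝ} [IsFiniteMeasure μ] {R : ℝ}
    (hμ : μ (Icc 0 R)ᶜ = 0) (k : ℕ) : Integrable (fun x : ℝ => x ^ k) μ :=
  integrable_of_bound_on hμ ((measurable_id.pow_const k).aestronglyMeasurable)
    (C := R ^ k) (fun x hx => by
      rw [abs_of_nonneg (pow_nonneg hx.1 k)]
      exact pow_le_pow_left₀ hx.1 hx.2 k)

lemma integral_poly_eq {μ ν : Measure ℝ} [IsFiniteMeasure μ] [IsFiniteMeasure ν] {R m : ℝ}
    (hμ : μ (Icc 0 m)ᶜ = 0) (hν : ν (Icc 0 R)ᶜ = 0)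
    (hmom : ∀ k : ℕ, ∫ x, x ^ k ∂μ = ∫ x, x ^ k ∂ν) (p : Polynomial ℝ) :
    ∫ x, p.eval x ∂μ = ∫ x, p.eval x ∂ν := by
  simp_rw [Polynomial.eval_eq_sum_range]
  rw [integral_finset_sum _ (fun i _ => (integrable_pow_of_support hμ i).const_mul _),
    integral_finset_sum _ (fun i _ => (integrable_pow_of_support hν i).const_mul _)]
  exact Finset.sum_congr rfl fun i _ => by rw [integral_const_mul, integral_const_mul, hmom i]

lemma abs_integral_sub_le {κ : Measure ℝ} [IsFiniteMeasure κ] {s : Set ℝ} (hs : κ sᶜ = 0)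
    {f g : ℝ → ℝ} (hfi : Integrable f κ) (hgi : Integrable g κ) {ε : ℝ}
    (hfg : ∀ x ∈ s, |f x - g x| ≤ ε) :
    |∫ x, f x ∂κ - ∫ x, g x ∂κ| ≤ ε * (κ univ).toReal := by
  have hae : ∀ᵐ x ∂κ, x ∈ s := by rw [ae_iff]; exact hs
  rw [← integral_sub hfi hgi]
  calc |∫ x, f x - g x ∂κ| ≤ ∫ x, |f x - g x| ∂κ := by
        simpa [Real.norm_eq_abs] using norm_integral_le_integral_norm (fun x => f x - g x) (μ := κ)
    _ ≤ ∫ _, ε ∂κ := by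
        refine integral_mono_ae (hfi.sub hgi).abs (integrable_const ε)
          (hae.mono fun x hx => hfg x hx)
    _ = ε * (κ univ).toReal := by simp [integral_const, smul_eq_mul, mul_comm, measureReal_def]

lemma integral_cont_eq {μ ν : Measure ℝ} [IsFiniteMeasure μ] [IsFiniteMeasure ν] {R : ℝ}
    (hμ : μ (Icc 0 R)ᶜ = 0) (hν : ν (Icc 0 R)ᶜ = 0)
    (hpoly : ∀ p : Polynomial ℝ, ∫ x, p.eval x ∂μ = ∫ x, p.eval x ∂ν)
    {f : ℝ → ℝ} (hf : Continuous f) : ∫ x, f x ∂μ = ∫ x, f x ∂ν := by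
  set M : ℝ := (μ univ).toReal + (ν univ).toReal with hM
  have hM0 : 0 ≤ M := add_nonneg ENNReal.toReal_nonneg ENNReal.toReal_nonneg
  obtain ⟨Cf, hCf⟩ := isCompact_Icc.exists_bound_of_continuousOn
    (f := f) (s := Icc (0:ℝ) R) hf.continuousOn
  have hfiμ : Integrable f μ := integrable_of_bound_on hμ hf.measurable.aestronglyMeasurable
    (C := Cf) (fun x hx => hCf x hx)
  have hfiν : Integrable f ν := integrable_of_bound_on hν hf.measurable.aestronglyMeasurable
    (C := Cf) (fun x hx => hCf x hx)
  have key : ∀ ε : ℝ, 0 < ε → |∫ x, f x ∂μ - ∫ x, f x ∂ν| ≤ ε := by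
    intro ε hε
    have hε' : 0 < ε / (M + 1) := by positivity
    obtain ⟨p, hp⟩ := exists_polynomial_near_of_continuousOn 0 R f hf.continuousOn _ hε'
    have hpc := (p.continuous_aeval (R := ℝ)).measurable.aestronglyMeasurable (μ := μ)
    obtain ⟨Cp, hCp⟩ := isCompact_Icc.exists_bound_of_continuousOn
      (f := fun x => p.eval x) (s := Icc (0:ℝ) R) (p.continuous).continuousOn
    have hpiμ : Integrable (fun x => p.eval x) μ := integrable_of_bound_on hμ
      (p.continuous).measurable.aestronglyMeasurable (C := Cp) hCp
    have hpiν : Integrable (fun x => p.eval x) ν := integrable_of_bound_on hν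
      (p.continuous).measurable.aestronglyMeasurable (C := Cp) hCp
    have e1 : |∫ x, f x ∂μ - ∫ x, p.eval x ∂μ| ≤ (ε / (M + 1)) * (μ univ).toReal :=
      abs_integral_sub_le hμ hfiμ hpiμ (fun x hx => by
        have := hp x hx; rw [abs_sub_comm] at this; exact this.le)
    have e2 : |∫ x, p.eval x ∂ν - ∫ x, f x ∂ν| ≤ (ε / (M + 1)) * (ν univ).toReal :=
      abs_integral_sub_le hν hpiν hfiν (fun x hx => (hp x hx).le)
    calc |∫ x, f x ∂μ - ∫ x, f x ∂ν|
        = |(∫ x, f x ∂μ - ∫ x, p.eval x ∂μ) + (∫ x, p.eval x ∂ν - ∫ x, f x ∂ν)| := by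
          rw [hpoly p]; ring_nf
      _ ≤ |∫ x, f x ∂μ - ∫ x, p.eval x ∂μ| + |∫ x, p.eval x ∂ν - ∫ x, f x ∂ν| := abs_add_le _ _
      _ ≤ (ε / (M + 1)) * (μ univ).toReal + (ε / (M + 1)) * (ν univ).toReal := add_le_add e1 e2
      _ = (ε / (M + 1)) * M := by rw [hM]; ring
      _ ≤ (ε / (M + 1)) * (M + 1) := by
          refine mul_le_mul_of_nonneg_left (by linarith) hε'.le
      _ = ε := by field_simp
  have h0 : |∫ x, f x ∂μ - ∫ x, f x ∂ν| ≤ 0 :=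
    le_of_forall_pos_le_add (by intro ε hε; simpa using key ε hε)
  have := abs_nonpos_iff.mp h0
  linarith [sub_eq_zero.mp this, this]

/-- Tail bound: if `μ` is supported in `[0,m]`, `ν` in `[0,R]`, and the moments agree,
then `μ` gives no mass beyond `R`. -/
lemma tail_zero {μ ν : Measure ℝ} [IsFiniteMeasure μ] [IsFiniteMeasure ν] {R m D : ℝ}
    (hR : 0 ≤ R) (hD : R < D)
    (hμ : μ (Icc 0 m)ᶜ = 0) (hν : ν (Icc 0 R)ᶜ = 0)
    (hmom : ∀ k : ℕ, ∫ x, x ^ k ∂μ = ∫ x, x ^ k ∂ν) : μ (Ioi D) = 0 := by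
  have hD0 : 0 < D := lt_of_le_of_lt hR hD
  have haeμ : ∀ᵐ x ∂μ, x ∈ Icc 0 m := by rw [ae_iff]; exact hμ
  have haeν : ∀ᵐ x ∂ν, x ∈ Icc 0 R := by rw [ae_iff]; exact hν
  have key : ∀ k : ℕ, D ^ (2 * k) * (μ (Ioi D)).toReal ≤ R ^ (2 * k) * (ν univ).toReal := by
    intro k
    have low : D ^ (2 * k) * (μ (Ioi D)).toReal ≤ ∫ x, x ^ (2 * k) ∂μ := by
      have hmono : ∫ x, (Ioi D).indicator (fun _ => D ^ (2 * k)) x ∂μ ≤ ∫ x, x ^ (2 * k) ∂μ := by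
        refine integral_mono_ae ((integrable_const _).indicator measurableSet_Ioi)
          (integrable_pow_of_support hμ _) (haeμ.mono fun x hx => ?_)
        by_cases hxD : x ∈ Ioi D
        · simpa [indicator_of_mem hxD] using pow_le_pow_left₀ hD0.le (le_of_lt hxD) (2 * k)
        · simpa [indicator_of_notMem hxD] using pow_nonneg hx.1 (2 * k)
      rwa [integral_indicator_const _ measurableSet_Ioi, smul_eq_mul, mul_comm] at hmono
    have up : ∫ x, x ^ (2 * k) ∂ν ≤ R ^ (2 * k) * (ν univ).toReal := by
      have hmono : ∫ x, x ^ (2 * k) ∂ν ≤ ∫ _, R ^ (2 * k) ∂ν := by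
        refine integral_mono_ae (integrable_pow_of_support hν _) (integrable_const _)
          (haeν.mono fun x hx => pow_le_pow_left₀ hx.1 hx.2 (2 * k))
      simpa [integral_const, smul_eq_mul, mul_comm, measureReal_def] using hmono
    exact low.trans ((hmom (2 * k)).le.trans up)
  have h2 : ∀ k : ℕ, (μ (Ioi D)).toReal ≤ ((R / D) ^ 2) ^ k * (ν univ).toReal := by
    intro k
    have hk := key k
    have hDk : 0 < D ^ (2 * k) := pow_pos hD0 _
    rw [mul_comm] at hk
    have := (le_div_iff₀ hDk).mpr hk
    calc (μ (Ioi D)).toReal ≤ R ^ (2 * k) * (ν univ).toReal / D ^ (2 * k) := this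
      _ = ((R / D) ^ 2) ^ k * (ν univ).toReal := by
          rw [← pow_mul, div_pow]
          ring
  have hr1 : (0:ℝ) ≤ (R / D) ^ 2 := sq_nonneg _
  have hr2 : (R / D) ^ 2 < 1 := by
    have : R / D < 1 := (div_lt_one hD0).mpr hD
    have h0 : 0 ≤ R / D := div_nonneg hR hD0.le
    nlinarith
  have hlim : Tendsto (fun k : ℕ => ((R / D) ^ 2) ^ k * (ν univ).toReal) atTop (𝓝 0) := by
    simpa using (tendsto_pow_atTop_nhds_zero_of_lt_one hr1 hr2).mul_const ((ν univ).toReal)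
  have hle : (μ (Ioi D)).toReal ≤ 0 := ge_of_tendsto' hlim h2
  have h0 : (μ (Ioi D)).toReal = 0 := le_antisymm hle ENNReal.toReal_nonneg
  exact (ENNReal.toReal_eq_zero_iff _).mp h0 |>.resolve_right (measure_ne_top μ _)

/-- Two finite measures supported in `[0,R]` with equal moments are equal. -/
lemma measure_ext_of_moments {μ ν : Measure ℝ} [IsFiniteMeasure μ] [IsFiniteMeasure ν] {R : ℝ}
    (hμ : μ (Icc 0 R)ᶜ = 0) (hν : ν (Icc 0 R)ᶜ = 0)
    (hpoly : ∀ p : Polynomial ℝ, ∫ x, p.eval x ∂μ = ∫ x, p.eval x ∂ν) : μ = ν := by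
  have hcont : ∀ f : ℝ → ℝ, Continuous f → ∫ x, f x ∂μ = ∫ x, f x ∂ν :=
    fun f hf => integral_cont_eq hμ hν hpoly hf
  refine Measure.ext_of_Iic μ ν fun t => ?_
  set g : ℕ → ℝ → ℝ := fun j x => max 0 (min 1 (1 - (j + 1 : ℝ) * (x - t))) with hg
  have hgc : ∀ j, Continuous (g j) := fun j =>
    continuous_const.max (continuous_const.min (by fun_prop))
  have hg0 : ∀ j x, 0 ≤ g j x := fun j x => le_max_left _ _
  have hg1 : ∀ j x, g j x ≤ 1 := fun j x =>
    max_le zero_le_one (min_le_left _ _)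
  have hlow : ∀ j x, (Iic t).indicator (fun _ => (1:ℝ)) x ≤ g j x := by
    intro j x
    by_cases hx : x ∈ Iic t
    · rw [indicator_of_mem hx]
      have h1 : (1:ℝ) ≤ 1 - (j + 1 : ℝ) * (x - t) := by
        have : (j + 1 : ℝ) * (x - t) ≤ 0 :=
          mul_nonpos_of_nonneg_of_nonpos (by positivity) (sub_nonpos.mpr hx)
        linarith
      calc (1:ℝ) = min 1 1 := (min_self 1).symm
        _ ≤ min 1 (1 - (j + 1 : ℝ) * (x - t)) := min_le_min le_rfl h1
        _ ≤ g j x := le_max_right _ _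
    · rw [indicator_of_notMem hx]; exact hg0 j x
  have hup : ∀ j x, g j x ≤ (Iic (t + 1 / (j + 1))).indicator (fun _ => (1:ℝ)) x := by
    intro j x
    by_cases hx : x ∈ Iic (t + 1 / (j + 1 : ℝ))
    · rw [indicator_of_mem hx]; exact hg1 j x
    · rw [indicator_of_notMem hx]
      simp only [mem_Iic, not_le] at hx
      have hj : (0:ℝ) < j + 1 := by positivity
      have : 1 - (j + 1 : ℝ) * (x - t) < 0 := by
        have h1 : 1 / (j + 1 : ℝ) < x - t := by linarith
        have := (div_lt_iff₀' hj).mp h1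
        linarith
      rw [hg]
      simp only
      rw [max_eq_left]
      exact (min_le_right _ _).trans this.le
  -- integrability of the auxiliary functions
  have hgint : ∀ (κ : Measure ℝ) [IsFiniteMeasure κ], ∀ j, Integrable (g j) κ := by
    intro κ _ j
    refine integrable_of_bound_on (s := univ) (by simp) ((hgc j).measurable.aestronglyMeasurable)
      (C := 1) (fun x _ => ?_)
    rw [abs_of_nonneg (hg0 j x)]; exact hg1 j x
  have hind : ∀ (κ : Measure ℝ) [IsFiniteMeasure κ], ∀ (u : ℝ),
      Integrable ((Iic u).indicator (fun _ => (1:ℝ))) κ := fun κ _ u =>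
    (integrable_const _).indicator measurableSet_Iic
  have keylim : ∀ (κ : Measure ℝ) [IsFiniteMeasure κ],
      Tendsto (fun j => ∫ x, g j x ∂κ) atTop (𝓝 (κ (Iic t)).toReal) := by
    intro κ _
    have hupper : Tendsto (fun j : ℕ => (κ (Iic (t + 1 / (j + 1)))).toReal) atTop
        (𝓝 (κ (Iic t)).toReal) := by
      have hanti : Antitone (fun j : ℕ => Iic (t + 1 / (j + 1 : ℝ))) := by
        intro j k hjk
        apply Iic_subset_Iic.mpr
        have : (1 : ℝ) / (k + 1) ≤ 1 / (j + 1) := by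
          apply one_div_le_one_div_of_le (by positivity)
          have := (Nat.cast_le (α := ℝ)).mpr hjk; linarith
        linarith
      have hiInter : (⋂ j : ℕ, Iic (t + 1 / (j + 1 : ℝ))) = Iic t := by
        ext x
        simp only [mem_iInter, mem_Iic]
        constructor
        · intro hx
          by_contra hxt
          push_neg at hxt
          obtain ⟨j, hj⟩ := exists_nat_one_div_lt (sub_pos.mpr hxt)
          have := hx j
          have : x - t ≤ 1 / (j + 1 : ℝ) := by linarith
          linarith
        · intro hx j
          have : (0:ℝ) < 1 / (j + 1) := by positivity
          linarith
      have := tendsto_measure_iInter_atTop (μ := κ)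
        (fun j => (measurableSet_Iic).nullMeasurableSet) hanti ⟨0, measure_ne_top _ _⟩
      rw [hiInter] at this
      exact ((ENNReal.tendsto_toReal (measure_ne_top _ _)).comp this)
    refine tendsto_of_tendsto_of_tendsto_of_le_of_le (g := fun _ : ℕ => (κ (Iic t)).toReal)
      tendsto_const_nhds hupper ?_ ?_
    · intro j
      have := integral_mono (hind κ t) (hgint κ j) (hlow j)
      rwa [integral_indicator_const _ measurableSet_Iic, smul_eq_mul, mul_one] at this
    · intro j
      have := integral_mono (hgint κ j) (hind κ (t + 1 / (j + 1))) (hup j)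
      rwa [integral_indicator_const _ measurableSet_Iic, smul_eq_mul, mul_one] at this
  have heq : ∀ j, ∫ x, g j x ∂μ = ∫ x, g j x ∂ν := fun j => hcont (g j) (hgc j)
  have := tendsto_nhds_unique (keylim μ) (by simpa only [heq] using keylim ν)
  exact (ENNReal.toReal_eq_toReal_iff' (measure_ne_top _ _) (measure_ne_top _ _)).mp this

lemma clm_ext_inner {S T : H →L[ℂ] H} (hST : ∀ h : H, (inner ℂ (S h) h : ℂ) = inner ℂ (T h) h) :
    S = T := by
  have := (ext_inner_map (S : H →ₗ[ℂ] H) (T : H →ₗ[ℂ] H)).mp (fun x => by simpa using hST x)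
  ext x
  exact LinearMap.congr_fun this x

lemma orth_of_idem {P Q : H →L[ℂ] H} (hP : P * P = P) (hQ : Q * Q = Q)
    (hPQ : (P + Q) * (P + Q) = P + Q) : P * Q = 0 := by
  have h : P * Q + Q * P = 0 := by
    have e := hPQ
    rw [add_mul, mul_add, mul_add, hP, hQ] at e
    have : P + Q + (P * Q + Q * P) = P + Q + 0 := by
      conv_rhs => rw [add_zero, ← e]
      abel
    exact add_left_cancel this
  have h1 : P * Q + P * Q * P = 0 := by
    have := congrArg (fun x => P * x) h
    simpa [mul_add, ← mul_assoc, hP] using this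
  have h2 : P * Q * P + Q * P = 0 := by
    rw [mul_assoc]
    have := congrArg (fun x => x * P) h
    simpa [add_mul, mul_assoc, hP] using this
  have h3 : P * Q = Q * P := by
    rw [eq_neg_of_add_eq_zero_left h1, ← eq_neg_of_add_eq_zero_right h2]
  rw [← h3] at h
  have h5 : (2 : ℂ) • (P * Q) = 0 := by rw [two_smul]; exact h
  simpa using (smul_eq_zero.mp h5).resolve_left (by norm_num)

namespace SemispectralMeasure
variable {X : Type*} [MeasurableSpace X]

lemma toFun_congr (G G' : SemispectralMeasure X H) {Δ Δ' : Set X}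
    (hΔ : MeasurableSet Δ) (hΔ' : MeasurableSet Δ')
    (hm : ∀ h : H, G.measure h Δ = G'.measure h Δ') : G.toFun Δ = G'.toFun Δ' :=
  clm_ext_inner fun h => by rw [G.eval h Δ hΔ, G'.eval h Δ' hΔ', hm h]

lemma toFun_add (E : SemispectralMeasure X H) {A B : Set X}
    (hA : MeasurableSet A) (hB : MeasurableSet B) (hd : Disjoint A B) :
    E.toFun (A ∪ B) = E.toFun A + E.toFun B := by
  apply clm_ext_inner; intro h
  haveI := E.finite h
  rw [E.eval h _ (hA.union hB), ContinuousLinearMap.add_apply, inner_add_left,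
    E.eval h A hA, E.eval h B hB, measure_union hd hB,
    ENNReal.toReal_add (measure_ne_top _ _) (measure_ne_top _ _)]
  push_cast; ring

lemma mul_disjoint {E : SemispectralMeasure X H} (hE : E.IsSpectral) {A B : Set X}
    (hA : MeasurableSet A) (hB : MeasurableSet B) (hd : Disjoint A B) :
    E.toFun A * E.toFun B = 0 :=
  orth_of_idem (hE A hA).2 (hE B hB).2
    (by rw [← E.toFun_add hA hB hd]; exact (hE _ (hA.union hB)).2)

lemma mul_inter {E : SemispectralMeasure X H} (hE : E.IsSpectral) {Δ Δ₀ : Set X}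
    (hΔ : MeasurableSet Δ) (hΔ₀ : MeasurableSet Δ₀) :
    E.toFun Δ * E.toFun Δ₀ = E.toFun (Δ ∩ Δ₀) := by
  have hX : MeasurableSet (Δ ∩ Δ₀) := hΔ.inter hΔ₀
  have e1 : E.toFun Δ = E.toFun (Δ ∩ Δ₀) + E.toFun (Δ \ Δ₀) := by
    rw [← E.toFun_add hX (hΔ.diff hΔ₀) (disjoint_sdiff_right.mono_left inter_subset_right),
      Set.inter_union_diff]
  have e2 : E.toFun Δ₀ = E.toFun (Δ ∩ Δ₀) + E.toFun (Δ₀ \ Δ) := by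
    rw [← E.toFun_add hX (hΔ₀.diff hΔ) (disjoint_sdiff_right.mono_left inter_subset_left),
      Set.inter_comm, Set.inter_union_diff]
  rw [e1, e2, add_mul, mul_add, mul_add, (hE _ hX).2,
    mul_disjoint hE hX (hΔ₀.diff hΔ) (disjoint_sdiff_right.mono_left inter_subset_left),
    mul_disjoint hE (hΔ.diff hΔ₀) hX (disjoint_sdiff_left.mono_right inter_subset_right),
    mul_disjoint hE (hΔ.diff hΔ₀) (hΔ₀.diff hΔ) (disjoint_sdiff_left.mono_right diff_subset)]
  simp

lemma measure_cutoff {E : SemispectralMeasure X H} (hE : E.IsSpectral) {Δ Δ₀ : Set X}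
    (hΔ : MeasurableSet Δ) (hΔ₀ : MeasurableSet Δ₀) (h : H) :
    E.measure (E.toFun Δ₀ h) Δ = E.measure h (Δ ∩ Δ₀) := by
  haveI := E.finite h; haveI := E.finite (E.toFun Δ₀ h)
  have hsa := (hE Δ₀ hΔ₀).1
  have key : (inner ℂ (E.toFun Δ (E.toFun Δ₀ h)) (E.toFun Δ₀ h) : ℂ)
      = inner ℂ (E.toFun (Δ ∩ Δ₀) h) h := by
    have hz := (hsa.isSymmetric (E.toFun Δ (E.toFun Δ₀ h)) h).symm
    simp only [ContinuousLinearMap.coe_coe] at hz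
    rw [hz]
    have he : E.toFun Δ₀ ((E.toFun Δ) ((E.toFun Δ₀) h))
        = (E.toFun Δ₀ * E.toFun Δ * E.toFun Δ₀) h := rfl
    have hset : (Δ₀ ∩ Δ) ∩ Δ₀ = Δ ∩ Δ₀ := by
      rw [Set.inter_comm Δ₀ Δ, Set.inter_assoc, Set.inter_self]
    rw [he, mul_inter hE hΔ₀ hΔ, mul_inter hE (hΔ₀.inter hΔ) hΔ₀, hset]
  have := (E.eval (E.toFun Δ₀ h) Δ hΔ).symm.trans (key.trans (E.eval h _ (hΔ.inter hΔ₀)))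
  have hr : (E.measure (E.toFun Δ₀ h) Δ).toReal = (E.measure h (Δ ∩ Δ₀)).toReal := by
    exact_mod_cast this
  exact (ENNReal.toReal_eq_toReal_iff' (measure_ne_top _ _) (measure_ne_top _ _)).mp hr

end SemispectralMeasure

lemma meas_restrict_Ici (κ : Measure ℝ) (hκ : κ (Set.Iio 0) = 0) (A : Set ℝ) :
    κ A = κ (A ∩ Set.Ici 0) := by
  refine le_antisymm ?_ (measure_mono inter_subset_left)
  calc κ A = κ ((A ∩ Ici 0) ∪ (A ∩ (Ici 0)ᶜ)) := by rw [Set.inter_union_compl]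
    _ ≤ κ (A ∩ Ici 0) + κ (A ∩ (Ici 0)ᶜ) := measure_union_le _ _
    _ ≤ κ (A ∩ Ici 0) + 0 := by
        gcongr
        rw [compl_Ici]
        exact (measure_mono_null inter_subset_right hκ).le
    _ = κ (A ∩ Ici 0) := add_zero _


/-- Let `F` be a semispectral Borel measure on `[0,∞)`, `n ≥ 1` and `ψ_n(x) = x^n`. If `E` is a
spectral measure on `[0,∞)` whose moments agree with those of the pushforward `F ∘ ψ_n⁻¹`, and
`F ∘ ψ_n⁻¹` has compact support, then `E = F ∘ ψ_n⁻¹`, and consequently `F` is spectral. -/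
theorem pushforward_determinate_spectral
    (F E : SemispectralMeasure ℝ H) (n : ℕ) (hn : 1 ≤ n)
    (hF0 : ∀ h : H, F.measure h (Set.Iio 0) = 0)
    (hE0 : ∀ h : H, E.measure h (Set.Iio 0) = 0)
    (hE : E.IsSpectral)
    (hcomp : ∃ C : ℝ, ∀ h : H, (F.measure h).map (fun x : ℝ => x ^ n) (Set.Ioi C) = 0)
    (hmom : ∀ (k : ℕ) (h : H), ∫ x, x ^ k ∂(E.measure h)
      = ∫ x, x ^ k ∂((F.measure h).map (fun x : ℝ => x ^ n))) :
    (∀ Δ : Set ℝ, MeasurableSet Δ → E.toFun Δ = F.toFun ((fun x : ℝ => x ^ n) ⁻¹' Δ)) ∧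
      F.IsSpectral := by
  have hn' : n ≠ 0 := Nat.one_le_iff_ne_zero.mp hn
  set ψ : ℝ → ℝ := fun x : ℝ => x ^ n with hψ
  have hψm : Measurable ψ := measurable_id.pow_const n
  obtain ⟨C, hC⟩ := hcomp
  set R : ℝ := max C 0 with hR
  have hR0 : (0:ℝ) ≤ R := le_max_right _ _
  have hcompl : (Icc (0:ℝ) R)ᶜ = Iio 0 ∪ Ioi R := by
    ext x
    simp only [mem_compl_iff, mem_Icc, mem_union, mem_Iio, mem_Ioi, not_and_or, not_le]
  -- finiteness instances
  haveI : ∀ h : H, IsFiniteMeasure (E.measure h) := E.finite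
  haveI : ∀ h : H, IsFiniteMeasure (F.measure h) := F.finite
  haveI : ∀ h : H, IsFiniteMeasure ((F.measure h).map ψ) :=
    fun h => Measure.isFiniteMeasure_map _ _
  -- support of the pushforward
  have hν_supp : ∀ h : H, ((F.measure h).map ψ) (Icc 0 R)ᶜ = 0 := by
    intro h
    rw [hcompl]
    refine measure_union_null ?_ ?_
    · rw [Measure.map_apply hψm measurableSet_Iio]
      refine measure_mono_null (fun x hx => ?_) (hF0 h)
      by_contra hx0
      simp only [mem_preimage, mem_Iio] at hx
      simp only [mem_Iio, not_lt] at hx0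
      exact absurd hx (not_lt.mpr (pow_nonneg hx0 n))
    · exact measure_mono_null (Ioi_subset_Ioi (le_max_left _ _)) (hC h)
  -- support of E's measures
  have hμ_supp : ∀ h : H, E.measure h (Icc 0 R)ᶜ = 0 := by
    intro h
    rw [hcompl]
    refine measure_union_null (hE0 h) ?_
    -- first: cutoff tails
    have step1 : ∀ (m : ℕ) (D : ℝ), R < D → E.measure h (Ioi D ∩ Icc 0 (m:ℝ)) = 0 := by
      intro m D hD
      set g : H := E.toFun (Icc 0 (m:ℝ)) h with hg
      have hcut : ∀ (Δ : Set ℝ), MeasurableSet Δ →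
          E.measure g Δ = E.measure h (Δ ∩ Icc 0 (m:ℝ)) :=
        fun Δ hΔ => SemispectralMeasure.measure_cutoff hE hΔ measurableSet_Icc h
      have hgsupp : E.measure g (Icc 0 (m:ℝ))ᶜ = 0 := by
        rw [hcut _ measurableSet_Icc.compl, Set.compl_inter_self, measure_empty]
      have := tail_zero (m := (m:ℝ)) hR0 hD hgsupp (hν_supp g) (fun k => hmom k g)
      rw [hcut _ measurableSet_Ioi] at this
      exact this
    have step2 : ∀ D : ℝ, R < D → E.measure h (Ioi D) = 0 := by
      intro D hD
      have hsub : Ioi D ⊆ ⋃ m : ℕ, (Ioi D ∩ Icc 0 (m:ℝ)) := by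
        intro x hx
        have hx0 : (0:ℝ) ≤ x := le_of_lt (lt_of_le_of_lt (hR0.trans hD.le) hx)
        exact mem_iUnion.mpr ⟨⌈x⌉₊, hx, hx0, Nat.le_ceil x⟩
      exact measure_mono_null hsub (measure_iUnion_null fun m => step1 m D hD)
    have hsub : Ioi R ⊆ ⋃ m : ℕ, Ioi (R + 1 / (m + 1 : ℝ)) := by
      intro x hx
      obtain ⟨m, hm⟩ := exists_nat_one_div_lt (sub_pos.mpr (mem_Ioi.mp hx))
      exact mem_iUnion.mpr ⟨m, by simp only [mem_Ioi]; linarith⟩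
    refine measure_mono_null hsub (measure_iUnion_null fun m => step2 _ ?_)
    have : (0:ℝ) < 1 / (m + 1 : ℝ) := by positivity
    linarith
  -- the measures agree
  have hmeas_eq : ∀ h : H, E.measure h = (F.measure h).map ψ := by
    intro h
    exact measure_ext_of_moments (hμ_supp h) (hν_supp h)
      (integral_poly_eq (hμ_supp h) (hν_supp h) (fun k => hmom k h))
  -- part 1
  have part1 : ∀ Δ : Set ℝ, MeasurableSet Δ → E.toFun Δ = F.toFun (ψ ⁻¹' Δ) := by
    intro Δ hΔ
    refine SemispectralMeasure.toFun_congr E F hΔ (hΔ.preimage hψm) (fun h => ?_)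
    rw [hmeas_eq h, Measure.map_apply hψm hΔ]
  refine ⟨part1, ?_⟩
  -- part 2 : F is spectral
  intro Δ hΔ
  set Δ' : Set ℝ := ψ '' (Δ ∩ Ici 0) with hΔ'def
  have hinj : InjOn ψ (Δ ∩ Ici 0) := fun a ha b hb hab =>
    (pow_left_inj₀ ha.2 hb.2 hn').mp hab
  have hΔ' : MeasurableSet Δ' :=
    (hΔ.inter measurableSet_Ici).image_of_continuousOn_injOn
      (continuous_pow n).continuousOn hinj
  have hpre : ψ ⁻¹' Δ' ∩ Ici 0 = Δ ∩ Ici 0 := by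
    ext x
    constructor
    · rintro ⟨hx1, hx0⟩
      obtain ⟨y, hy, hyx⟩ := hx1
      have : y = x := (pow_left_inj₀ hy.2 hx0 hn').mp hyx
      exact this ▸ hy
    · rintro ⟨hxΔ, hx0⟩
      exact ⟨mem_image_of_mem ψ ⟨hxΔ, hx0⟩, hx0⟩
  have hFeq : F.toFun Δ = F.toFun (ψ ⁻¹' Δ') := by
    refine SemispectralMeasure.toFun_congr F F hΔ (hΔ'.preimage hψm) (fun h => ?_)
    rw [meas_restrict_Ici (F.measure h) (hF0 h) Δ,
      meas_restrict_Ici (F.measure h) (hF0 h) (ψ ⁻¹' Δ'), hpre]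
  have hEF := part1 Δ' hΔ'
  rw [hFeq, ← hEF]
  exact hE Δ' hΔ'
end

section
/- Let A be a bounded subnormal operator on a Hilbert space H with normal extension N on K, and let P be the orthogonal projection of K onto H. Define the semispectral measure Θ(Δ) = P G_N(Δ)|_H for Borel sets Δ ⊆ ℂ, where G_N is the spectral measure of N. Then A^{*k} A^k = ∫_ℂ |z|^{2k} dΘ(z) for all nonnegative integers k. -/
open ContinuousLinearMap MeasureTheory

variable {H : Type*} [NormedAddCommGroup H] [InnerProductSpace ℂ H] [CompleteSpace H]

/-- Let `A` be subnormal with normal extension `N` on `K` (the inclusion `H ⊆ K` realized by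
the isometric embedding `J`), let `G` be the spectral measure of `N` (characterized by being
spectral, compactly supported, and reproducing the moments `⟨N^{*j} N^k h, h⟩ = ∫ z̄^j z^k dG`),
and let `Θ(Δ) = P G(Δ)|_H`, so that `⟨Θ(·)h, h⟩ = G.measure (J h)`. Then
`A^{*k} A^k = ∫_ℂ |z|^{2k} dΘ(z)` for all `k ∈ ℕ` (via quadratic forms). -/
theorem subnormal_moments_via_spectral_measure
    {K : Type*} [NormedAddCommGroup K] [InnerProductSpace ℂ K] [CompleteSpace K]
    (A : H →L[ℂ] H) (N : K →L[ℂ] K) (hN : adjoint N * N = N * adjoint N)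
    (J : H →ₗᵢ[ℂ] K) (hext : ∀ h : H, N (J h) = J (A h))
    (G : SemispectralMeasure ℂ K) (hG : G.IsSpectral)
    (hGcomp : ∃ C : ℝ, ∀ g : K, G.measure g {z : ℂ | C < ‖z‖} = 0)
    (hGmom : ∀ (j k : ℕ) (g : K),
      (inner ℂ (((adjoint N) ^ j * N ^ k) g) g : ℂ)
        = ∫ z, (starRingEnd ℂ z) ^ j * z ^ k ∂(G.measure g)) :
    ∀ (k : ℕ) (h : H),
      (inner ℂ (((adjoint A) ^ k * A ^ k) h) h : ℂ)
        = ((∫ z, ‖z‖ ^ (2 * k) ∂(G.measure (J h)) : ℝ) : ℂ) := by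
  intro k h
  have hpowJ : ∀ n : ℕ, (N ^ n) (J h) = J ((A ^ n) h) := by
    intro n
    induction n with
    | zero => simp
    | succ n ih =>
        rw [pow_succ', pow_succ', ContinuousLinearMap.mul_apply,
          ContinuousLinearMap.mul_apply, ih, hext]
  have hadjA : (adjoint A) ^ k = adjoint (A ^ k) := by
    rw [← ContinuousLinearMap.star_eq_adjoint, ← ContinuousLinearMap.star_eq_adjoint, star_pow]
  have hadjN : (adjoint N) ^ k = adjoint (N ^ k) := by
    rw [← ContinuousLinearMap.star_eq_adjoint, ← ContinuousLinearMap.star_eq_adjoint, star_pow]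
  have key : (inner ℂ (((adjoint A) ^ k * A ^ k) h) h : ℂ)
      = inner ℂ (((adjoint N) ^ k * N ^ k) (J h)) (J h) := by
    rw [ContinuousLinearMap.mul_apply, ContinuousLinearMap.mul_apply, hadjA, hadjN,
      ContinuousLinearMap.adjoint_inner_left, ContinuousLinearMap.adjoint_inner_left,
      hpowJ, ← LinearIsometry.inner_map_map J]
  rw [key, hGmom k k]
  have hpt : ∀ z : ℂ, (starRingEnd ℂ z) ^ k * z ^ k = ((‖z‖ ^ (2 * k) : ℝ) : ℂ) := by
    intro z
    rw [← mul_pow]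
    have h2 : (starRingEnd ℂ z) * z = ((‖z‖ ^ 2 : ℝ) : ℂ) := by
      rw [mul_comm, Complex.mul_conj]
      norm_cast
      rw [Complex.normSq_eq_norm_sq]
    rw [h2, ← Complex.ofReal_pow, ← pow_mul]
  simp_rw [hpt]
  exact integral_ofReal
end
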